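/- arXiv:2007.10673 — 10 statements merged into one kernel-verified Lean document; each statement's English description precedes it below -/
import Mathlib

section
/- Let k ≥ 1 and let P ∈ ℝ_{≥0}^{n×m} be a nonnegative matrix whose entries sum to 1 (a classical correlation), and suppose r = rank_psd^{(k)}(P). Then there exist a probability distribution (p_1,…,p_r) with p_l > 0 for all l, and nonnegative matrices P_1,…,P_r ∈ ℝ_{≥0}^{n×m}, each with entries summing to 1 and with PSD-rank prank(P_l) ≤ k, such that P = Σ_{l=1}^r p_l P_l. -/
open Matrix BigOperators Kronecker
open scoped ComplexOrder

/-- `P` admits a PSD factorization of size `r`: there are `r × r` complex positive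
semidefinite matrices `C i` (one per row index) and `D j` (one per column index) with
`P i j = tr (C i * D j)`. -/
def HasPsdFac {α β : Type} [Fintype α] [Fintype β] (P : Matrix α β ℝ) (r : ℕ) : Prop :=
  ∃ (C : α → Matrix (Fin r) (Fin r) ℂ) (D : β → Matrix (Fin r) (Fin r) ℂ),
    (∀ i, (C i).PosSemidef) ∧ (∀ j, (D j).PosSemidef) ∧
      ∀ i j, (P i j : ℂ) = ((C i) * (D j)).trace

/-- The PSD-rank of a nonnegative matrix: the least size of a PSD factorization. -/
noncomputable def prank {α β : Type} [Fintype α] [Fintype β] (P : Matrix α β ℝ) : ℕ :=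
  sInf {r | HasPsdFac P r}

/-- `P` admits a `k`-block PSD factorization of size `r`: there are `k × k` complex
positive semidefinite matrices `C i l`, `D j l` (`l ∈ [r]`) with
`P i j = ∑ l, tr (C i l * D j l)`. -/
def HasBlockPsdFac {α β : Type} [Fintype α] [Fintype β] (k : ℕ)
    (P : Matrix α β ℝ) (r : ℕ) : Prop :=
  ∃ (C : α → Fin r → Matrix (Fin k) (Fin k) ℂ)
    (D : β → Fin r → Matrix (Fin k) (Fin k) ℂ),
    (∀ i l, (C i l).PosSemidef) ∧ (∀ j l, (D j l).PosSemidef) ∧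
      ∀ i j, (P i j : ℂ) = ∑ l, ((C i l) * (D j l)).trace

/-- The `k`-block PSD rank of a nonnegative matrix:
the least size of a `k`-block PSD factorization. -/
noncomputable def kprank {α β : Type} [Fintype α] [Fintype β] (k : ℕ)
    (P : Matrix α β ℝ) : ℕ :=
  sInf {r | HasBlockPsdFac k P r}

/-- The nonnegative rank of a nonnegative matrix: the least `r` such that `P` is a sum
of `r` nonnegative rank-one matrices (outer products of nonnegative vectors). -/
noncomputable def nnRank {α β : Type} [Fintype α] [Fintype β] (P : Matrix α β ℝ) : ℕ :=
  sInf {r | ∃ (u : Fin r → α → ℝ) (v : Fin r → β → ℝ),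
    (∀ l i, 0 ≤ u l i) ∧ (∀ l j, 0 ≤ v l j) ∧ ∀ i j, P i j = ∑ l, u l i * v l j}


lemma psd_diag_nonneg {k : ℕ} {A : Matrix (Fin k) (Fin k) ℂ} (hA : A.PosSemidef)
    (i : Fin k) : 0 ≤ A i i := by
  exact hA.diag_nonneg

lemma psd_trace_nonneg {k : ℕ} {A : Matrix (Fin k) (Fin k) ℂ} (hA : A.PosSemidef) :
    0 ≤ A.trace :=
  Finset.sum_nonneg fun i _ => psd_diag_nonneg hA i

open scoped MatrixOrder in
lemma psd_mul_trace_nonneg {k : ℕ} {A B : Matrix (Fin k) (Fin k) ℂ}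
    (hA : A.PosSemidef) (hB : B.PosSemidef) : 0 ≤ (A * B).trace := by
  obtain ⟨M, rfl⟩ := CStarAlgebra.nonneg_iff_eq_star_mul_self.mp hB.nonneg
  rw [Matrix.star_eq_conjTranspose, ← Matrix.mul_assoc, Matrix.trace_mul_cycle]
  exact psd_trace_nonneg (hA.mul_mul_conjTranspose_same M)

lemma psd_smul {k : ℕ} {c : ℝ} (hc : 0 ≤ c) {M : Matrix (Fin k) (Fin k) ℂ}
    (hM : M.PosSemidef) : ((c : ℂ) • M).PosSemidef := by
  constructor
  · unfold Matrix.IsHermitian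
    rw [Matrix.conjTranspose_smul, hM.1.eq]
    congr 1
    simp
  · intro x
    have hc' : 0 ≤ (c : ℂ) := by exact_mod_cast Complex.zero_le_real.mpr hc
    exact (hM.smul hc').2 x

lemma exists_blockfac {n m k : ℕ} (hk : 1 ≤ k) (P : Matrix (Fin n) (Fin m) ℝ)
    (hP : ∀ i j, 0 ≤ P i j) : HasBlockPsdFac k P (n * m) := by
  set z : Fin k := ⟨0, hk⟩
  set E : Matrix (Fin k) (Fin k) ℂ := Matrix.single z z 1 with hE
  have hEH : Eᴴ = E := by
    ext a b
    simp [hE, Matrix.single, Matrix.conjTranspose_apply, and_comm, apply_ite (star : ℂ → ℂ)]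
  have hEpsd : E.PosSemidef := by
    have h2 : E = Eᴴ * E := by rw [hEH, hE, Matrix.single_mul_single_same, mul_one]
    rw [h2]; exact Matrix.posSemidef_conjTranspose_mul_self E
  have hEtr : E.trace = 1 := by
    simp [hE, Matrix.trace, Matrix.diag, Matrix.single]
  refine ⟨fun i l => if (finProdFinEquiv.symm l).1 = i
      then ((P i (finProdFinEquiv.symm l).2 : ℝ) : ℂ) • E else 0,
    fun j l => if (finProdFinEquiv.symm l).2 = j then E else 0, ?_, ?_, ?_⟩
  · intro i l
    dsimp only
    split
    · exact psd_smul (hP _ _) hEpsd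
    · exact Matrix.PosSemidef.zero
  · intro j l
    dsimp only
    split
    · exact hEpsd
    · exact Matrix.PosSemidef.zero
  · intro i j
    rw [← Equiv.sum_comp finProdFinEquiv]
    rw [Fintype.sum_prod_type]
    simp only [Equiv.symm_apply_apply]
    have hEE : E * E = E := by rw [hE, Matrix.single_mul_single_same, mul_one]
    simp [ite_mul, mul_ite, Matrix.mul_zero, Matrix.zero_mul, hEE,
      apply_ite Matrix.trace, Matrix.trace_zero, Matrix.trace_smul, hEtr,
      Finset.sum_ite_eq, Finset.sum_ite_eq', smul_eq_mul]

theorem stmt1 {n m k : ℕ} (hk : 1 ≤ k)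
    (P : Matrix (Fin n) (Fin m) ℝ) (hP : ∀ i j, 0 ≤ P i j)
    (hPsum : ∑ i, ∑ j, P i j = 1)
    (r : ℕ) (hr : r = kprank k P) :
    ∃ (p : Fin r → ℝ) (Q : Fin r → Matrix (Fin n) (Fin m) ℝ),
      (∀ l, 0 < p l) ∧ (∑ l, p l = 1) ∧
      (∀ l x y, 0 ≤ Q l x y) ∧ (∀ l, ∑ x, ∑ y, Q l x y = 1) ∧
      (∀ l, prank (Q l) ≤ k) ∧ P = ∑ l, p l • Q l := by
  classical
  have hne : HasBlockPsdFac k P (n * m) := exists_blockfac hk P hP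
  have hmem : HasBlockPsdFac k P r := by
    have hset : {r | HasBlockPsdFac k P r}.Nonempty := ⟨n * m, hne⟩
    rw [hr]; exact Nat.sInf_mem hset
  obtain ⟨C, D, hC, hD, hfac⟩ := hmem
  set Q' : Fin r → Matrix (Fin n) (Fin m) ℝ :=
    fun l => Matrix.of fun i j => ((C i l * D j l).trace).re with hQ'
  have hQ'nonneg : ∀ l i j, 0 ≤ Q' l i j := fun l i j =>
    (Complex.nonneg_iff.mp (psd_mul_trace_nonneg (hC i l) (hD j l))).1
  have htr : ∀ i j l, (C i l * D j l).trace = ((Q' l i j : ℝ) : ℂ) := by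
    intro i j l
    obtain ⟨hre, him⟩ := Complex.nonneg_iff.mp (psd_mul_trace_nonneg (hC i l) (hD j l))
    apply Complex.ext
    · simp [hQ']
    · simp [hQ', ← him]
  have hPQ : ∀ i j, P i j = ∑ l, Q' l i j := by
    intro i j
    have h1 := hfac i j
    simp only [htr] at h1
    exact_mod_cast h1
  set s : Fin r → ℝ := fun l => ∑ i, ∑ j, Q' l i j with hs
  have hsnonneg : ∀ l, 0 ≤ s l := fun l =>
    Finset.sum_nonneg fun i _ => Finset.sum_nonneg fun j _ => hQ'nonneg l i j
  have hssum : ∑ l, s l = 1 := by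
    calc ∑ l, ∑ i, ∑ j, Q' l i j = ∑ i, ∑ l, ∑ j, Q' l i j := Finset.sum_comm
      _ = ∑ i, ∑ j, ∑ l, Q' l i j := Finset.sum_congr rfl fun i _ => Finset.sum_comm
      _ = ∑ i, ∑ j, P i j := by
          refine Finset.sum_congr rfl fun i _ => Finset.sum_congr rfl fun j _ => ?_
          exact (hPQ i j).symm
      _ = 1 := hPsum
  have hspos : ∀ l, 0 < s l := by
    intro l0
    rcases (hsnonneg l0).lt_or_eq with h | h
    · exact h
    exfalso
    have hQ0 : ∀ i j, Q' l0 i j = 0 := by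
      intro i j
      have h1 : ∑ i, ∑ j, Q' l0 i j = 0 := h.symm
      have h2 := (Finset.sum_eq_zero_iff_of_nonneg
        (fun i _ => Finset.sum_nonneg fun j _ => hQ'nonneg l0 i j)).mp h1 i
        (Finset.mem_univ i)
      exact (Finset.sum_eq_zero_iff_of_nonneg
        (fun j _ => hQ'nonneg l0 i j)).mp h2 j (Finset.mem_univ j)
    obtain ⟨r', rfl⟩ := Nat.exists_eq_succ_of_ne_zero (Nat.pos_iff_ne_zero.mp l0.pos)
    have hfac' : HasBlockPsdFac k P r' := by
      refine ⟨fun i l => C i (l0.succAbove l), fun j l => D j (l0.succAbove l),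
        fun i l => hC _ _, fun j l => hD _ _, ?_⟩
      intro i j
      have h2 := hfac i j
      rw [Fin.sum_univ_succAbove _ l0] at h2
      have h3 : (C i l0 * D j l0).trace = 0 := by rw [htr, hQ0]; simp
      rw [h3, zero_add] at h2
      exact h2
    have hle : kprank k P ≤ r' := Nat.sInf_le hfac'
    omega
  refine ⟨s, fun l => (s l)⁻¹ • Q' l, hspos, hssum, ?_, ?_, ?_, ?_⟩
  · intro l x y
    simp only [Matrix.smul_apply, smul_eq_mul]
    exact mul_nonneg (inv_nonneg.mpr (hsnonneg l)) (hQ'nonneg l x y)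
  · intro l
    simp only [Matrix.smul_apply, smul_eq_mul, ← Finset.mul_sum]
    exact inv_mul_cancel₀ (hspos l).ne'
  · intro l
    apply Nat.sInf_le
    refine ⟨fun i => (((s l)⁻¹ : ℝ) : ℂ) • C i l, fun j => D j l,
      fun i => psd_smul (inv_nonneg.mpr (hsnonneg l)) (hC i l), fun j => hD j l, ?_⟩
    intro i j
    rw [Matrix.smul_mul, Matrix.trace_smul, htr]
    simp only [Matrix.smul_apply, smul_eq_mul]
    push_cast
    ring
  · ext i j
    simp only [Matrix.sum_apply, Matrix.smul_apply, smul_eq_mul]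
    rw [hPQ i j]
    refine Finset.sum_congr rfl fun l _ => ?_
    rw [← mul_assoc, mul_inv_cancel₀ (hspos l).ne', one_mul]
end

section
/- Let k ≥ 1 and let P ∈ ℝ_{≥0}^{n×m} be a nonnegative matrix whose entries sum to 1. Suppose there exist pairwise disjoint combinatorial rectangles X_1×Y_1, …, X_t×Y_t (with X_a ⊆ [n], Y_a ⊆ [m]) whose union contains the positions of all nonzero entries of P, and such that for each a the submatrix of P indexed by X_a×Y_a has PSD-rank at most k. Then rank_psd^{(k)}(P) ≤ t. -/
open Matrix BigOperators Kronecker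
open scoped ComplexOrder

private lemma exists_psdfac {α β : Type} [Fintype α] [Fintype β] (Q : Matrix α β ℝ)
    (hQ : ∀ i j, 0 ≤ Q i j) : HasPsdFac Q (Fintype.card β) := by
  classical
  set e := Fintype.equivFin β
  refine ⟨fun i => Matrix.diagonal (fun l => (Q i (e.symm l) : ℂ)),
    fun j => Matrix.diagonal (fun l => if l = e j then 1 else 0), ?_, ?_, ?_⟩
  · intro i
    rw [Matrix.posSemidef_diagonal_iff]
    intro l
    exact_mod_cast hQ i (e.symm l)
  · intro j
    rw [Matrix.posSemidef_diagonal_iff]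
    intro l
    split <;> norm_num
  · intro i j
    rw [Matrix.diagonal_mul_diagonal, Matrix.trace_diagonal]
    rw [Finset.sum_eq_single (e j)]
    · simp
    · intro b _ hb; simp [hb]
    · simp

private lemma psdfac_pad {α β : Type} [Fintype α] [Fintype β] {Q : Matrix α β ℝ} {r k : ℕ}
    (hrk : r ≤ k) (h : HasPsdFac Q r) : HasPsdFac Q k := by
  classical
  obtain ⟨C, D, hC, hD, hEq⟩ := h
  set A : Matrix (Fin k) (Fin r) ℂ :=
    Matrix.of (fun a l => if (a : ℕ) = (l : ℕ) then 1 else 0) with hA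
  have h1 : Aᴴ * A = 1 := by
    ext l l'
    simp only [Matrix.mul_apply, Matrix.conjTranspose_apply, hA, Matrix.of_apply]
    rw [Finset.sum_eq_single (Fin.castLE hrk l)]
    · by_cases hll : l = l' <;>
        simp [hll, Matrix.one_apply, Fin.ext_iff, Fin.val_eq_val]
    · intro b _ hb
      have : ¬ ((b:ℕ) = (l:ℕ)) := by
        intro hc; exact hb (by ext; simpa using hc)
      simp [this]
    · simp
  refine ⟨fun i => A * C i * Aᴴ, fun j => A * D j * Aᴴ,
    fun i => (hC i).mul_mul_conjTranspose_same A,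
    fun j => (hD j).mul_mul_conjTranspose_same A, ?_⟩
  intro i j
  rw [hEq i j]
  rw [show A * C i * Aᴴ * (A * D j * Aᴴ) = A * (C i * (Aᴴ * A) * D j) * Aᴴ by
    simp only [Matrix.mul_assoc]]
  rw [h1, Matrix.mul_one, Matrix.trace_mul_cycle, ← Matrix.mul_assoc, h1, Matrix.one_mul]

theorem stmt4 {n m k t : ℕ} (hk : 1 ≤ k)
    (P : Matrix (Fin n) (Fin m) ℝ) (hP : ∀ i j, 0 ≤ P i j)
    (hPsum : ∑ i, ∑ j, P i j = 1)
    (X : Fin t → Finset (Fin n)) (Y : Fin t → Finset (Fin m))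
    (hdisj : ∀ a b, a ≠ b →
      ∀ (i : Fin n) (j : Fin m), i ∈ X a → j ∈ Y a → ¬ (i ∈ X b ∧ j ∈ Y b))
    (hcover : ∀ (i : Fin n) (j : Fin m), P i j ≠ 0 → ∃ a, i ∈ X a ∧ j ∈ Y a)
    (hsub : ∀ a, prank (P.submatrix (fun i : (X a : Finset (Fin n)) => (i : Fin n))
      (fun j : (Y a : Finset (Fin m)) => (j : Fin m))) ≤ k) :
    kprank k P ≤ t := by
  classical
  set Q : (a : Fin t) → Matrix (X a : Finset (Fin n)) (Y a : Finset (Fin m)) ℝ :=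
    fun a => P.submatrix (fun i => (i : Fin n)) (fun j => (j : Fin m)) with hQdef
  have hfac : ∀ a, HasPsdFac (Q a) k := by
    intro a
    have hne : {r | HasPsdFac (Q a) r}.Nonempty :=
      ⟨_, exists_psdfac (Q a) (fun i j => hP _ _)⟩
    have hmem : HasPsdFac (Q a) (prank (Q a)) := Nat.sInf_mem hne
    exact psdfac_pad (hsub a) hmem
  choose C D hC hD hEq using hfac
  have : HasBlockPsdFac k P t := by
    refine ⟨fun i a => if h : i ∈ X a then C a ⟨i, h⟩ else 0,
      fun j a => if h : j ∈ Y a then D a ⟨j, h⟩ else 0, ?_, ?_, ?_⟩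
    · intro i a; dsimp only; split
      · exact hC a _
      · exact Matrix.PosSemidef.zero
    · intro j a; dsimp only; split
      · exact hD a _
      · exact Matrix.PosSemidef.zero
    · intro i j
      have hterm : ∀ a, ((if h : i ∈ X a then C a ⟨i, h⟩ else 0) *
          (if h : j ∈ Y a then D a ⟨j, h⟩ else 0)).trace
          = if i ∈ X a ∧ j ∈ Y a then (P i j : ℂ) else 0 := by
        intro a
        by_cases hi : i ∈ X a
        · by_cases hj : j ∈ Y a
          · rw [dif_pos hi, dif_pos hj, if_pos (⟨hi, hj⟩ : i ∈ X a ∧ j ∈ Y a)]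
            exact (hEq a ⟨i, hi⟩ ⟨j, hj⟩).symm
          · simp [hi, hj]
        · simp [hi]
      rw [Finset.sum_congr rfl (fun a _ => hterm a)]
      by_cases hPij : P i j = 0
      · simp only [hPij]
        rw [Finset.sum_eq_zero]
        · norm_num
        · intro a _; simp
      · obtain ⟨a, ha⟩ := hcover i j hPij
        rw [Finset.sum_eq_single a]
        · simp [ha]
        · intro b _ hb
          rw [if_neg (hdisj a b (Ne.symm hb) i j ha.1 ha.2)]
        · intro h; exact absurd (Finset.mem_univ a) h
  exact Nat.sInf_le this
end

section
/- Let k ≥ 1 and let P_1,…,P_m ∈ ℝ_{≥0}^{n×n'} be nonnegative matrices with PSD-rank prank(P_i) ≤ k for each i, and let P = (1/m)·diag(P_1,…,P_m) ∈ ℝ_{≥0}^{mn×mn'} be the corresponding block diagonal nonnegative matrix. Then rank_psd^{(k)}(P) ≤ m; moreover, if in addition prank(P) ≥ k·m, then rank_psd^{(k)}(P) = m. -/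
open Matrix BigOperators Kronecker
open scoped ComplexOrder

/-- Real-scalar multiples of PSD matrices are PSD. -/
lemma aux_psd_smul {k : ℕ} {M : Matrix (Fin k) (Fin k) ℂ} (hM : M.PosSemidef)
    {c : ℝ} (hc : 0 ≤ c) : ((c : ℂ) • M).PosSemidef := by
  have h : ((c : ℂ) • M) = (((Real.sqrt c : ℂ)) • (1 : Matrix (Fin k) (Fin k) ℂ)) * M *
      (((Real.sqrt c : ℂ)) • (1 : Matrix (Fin k) (Fin k) ℂ))ᴴ := by
    rw [conjTranspose_smul, conjTranspose_one]
    simp only [Matrix.smul_mul, Matrix.mul_smul, Matrix.one_mul, Matrix.mul_one, smul_smul]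
    rw [Complex.star_def, Complex.conj_ofReal, ← Complex.ofReal_mul, Real.mul_self_sqrt hc]
  rw [h]
  exact hM.mul_mul_conjTranspose_same _

/-- Padding: a PSD factorization of size `r` yields one of any size `s ≥ r`. -/
lemma aux_psdFac_mono {α β : Type} [Fintype α] [Fintype β] {P : Matrix α β ℝ} {r s : ℕ}
    (h : r ≤ s) (hf : HasPsdFac P r) : HasPsdFac P s := by
  obtain ⟨C, D, hC, hD, hCD⟩ := hf
  set E : Matrix (Fin s) (Fin r) ℂ :=
    Matrix.of fun a l => if (a : ℕ) = (l : ℕ) then 1 else 0 with hE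
  have hEE : Eᴴ * E = (1 : Matrix (Fin r) (Fin r) ℂ) := by
    ext l l'
    simp only [Matrix.mul_apply, conjTranspose_apply, hE, Matrix.of_apply]
    rw [Finset.sum_eq_single (Fin.castLE h l)]
    · simp only [Fin.coe_castLE]
      by_cases hll : l = l'
      · simp [hll, Matrix.one_apply]
      · have : (l : ℕ) ≠ (l' : ℕ) := fun hc => hll (Fin.ext hc)
        simp [this, Matrix.one_apply, hll]
    · intro b _ hb
      have : (b : ℕ) ≠ (l : ℕ) := by
        intro hbl
        exact hb (Fin.ext (by simpa using hbl))
      simp [this]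
    · intro hmem; exact absurd (Finset.mem_univ _) hmem
  have key : ∀ (A B : Matrix (Fin r) (Fin r) ℂ),
      ((E * A * Eᴴ) * (E * B * Eᴴ)).trace = (A * B).trace := by
    intro A B
    have h1 : (E * A * Eᴴ) * (E * B * Eᴴ) = E * (A * B) * Eᴴ := by
      have h2 : (E * A * Eᴴ) * (E * B * Eᴴ) = E * A * (Eᴴ * E) * B * Eᴴ := by
        simp only [Matrix.mul_assoc]
      rw [h2, hEE, Matrix.mul_one, Matrix.mul_assoc E A B]
    rw [h1, Matrix.trace_mul_comm (E * (A * B)) Eᴴ, ← Matrix.mul_assoc, hEE, Matrix.one_mul]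
  exact ⟨fun i => E * C i * Eᴴ, fun j => E * D j * Eᴴ,
    fun i => (hC i).mul_mul_conjTranspose_same E,
    fun j => (hD j).mul_mul_conjTranspose_same E,
    fun i j => by rw [key, ← hCD]⟩

/-- Every entrywise-nonnegative matrix with `n'` columns has a PSD factorization of size `n'`. -/
lemma aux_psdFac_exists {α : Type} [Fintype α] {n' : ℕ} (P : Matrix α (Fin n') ℝ)
    (hP : ∀ i j, 0 ≤ P i j) : HasPsdFac P n' := by
  refine ⟨fun i => Matrix.diagonal (fun j => (P i j : ℂ)),
    fun j => Matrix.diagonal (fun j' => if j' = j then 1 else 0), ?_, ?_, ?_⟩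
  · intro i
    exact Matrix.PosSemidef.diagonal fun j => by
      simpa using Complex.zero_le_real.mpr (hP i j)
  · intro j
    exact Matrix.PosSemidef.diagonal fun j' => by
      by_cases h : j' = j <;> simp [h]
  · intro i j
    rw [Matrix.diagonal_mul_diagonal, Matrix.trace_diagonal]
    simp

/-- A block diagonal of PSD matrices is PSD. -/
lemma aux_psd_blockDiagonal {ι : Type} [Fintype ι] [DecidableEq ι] {k : ℕ}
    {M : ι → Matrix (Fin k) (Fin k) ℂ} (h : ∀ l, (M l).PosSemidef) :
    (Matrix.blockDiagonal M).PosSemidef := by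
  choose B hB using fun l => (show ∃ B : Matrix (Fin k) (Fin k) ℂ, M l = Bᴴ * B by
    open scoped MatrixOrder in
    exact CStarAlgebra.nonneg_iff_eq_star_mul_self.mp (h l).nonneg)
  have : Matrix.blockDiagonal M = (Matrix.blockDiagonal B)ᴴ * Matrix.blockDiagonal B := by
    rw [Matrix.blockDiagonal_conjTranspose, ← Matrix.blockDiagonal_mul]
    exact congrArg _ (funext hB)
  rw [this]
  exact Matrix.posSemidef_conjTranspose_mul_self _

lemma aux_trace_submatrix_equiv {γ δ : Type} [Fintype γ] [Fintype δ] (e : γ ≃ δ)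
    (A : Matrix δ δ ℂ) : (A.submatrix e e).trace = A.trace :=
  Fintype.sum_equiv e _ _ fun i => rfl

/-- A `k`-block PSD factorization of size `r` yields a PSD factorization of size `k * r`. -/
lemma aux_block_to_psd {α β : Type} [Fintype α] [Fintype β] {k r : ℕ} {P : Matrix α β ℝ}
    (h : HasBlockPsdFac k P r) : HasPsdFac P (k * r) := by
  obtain ⟨C, D, hC, hD, hCD⟩ := h
  let e : Fin (k * r) ≃ Fin k × Fin r := finProdFinEquiv.symm
  refine ⟨fun i => (Matrix.blockDiagonal (C i)).submatrix e e,
    fun j => (Matrix.blockDiagonal (D j)).submatrix e e, ?_, ?_, ?_⟩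
  · exact fun i => (aux_psd_blockDiagonal (hC i)).submatrix e
  · exact fun j => (aux_psd_blockDiagonal (hD j)).submatrix e
  · intro i j
    rw [Matrix.submatrix_mul_equiv, aux_trace_submatrix_equiv,
      ← Matrix.blockDiagonal_mul, Matrix.trace_blockDiagonal, hCD]

theorem stmt5 {n n' m k : ℕ} (hk : 1 ≤ k) (hm : 1 ≤ m)
    (Q : Fin m → Matrix (Fin n) (Fin n') ℝ) (hQ : ∀ a i j, 0 ≤ Q a i j)
    (hQrank : ∀ a, prank (Q a) ≤ k)
    (P : Matrix (Fin m × Fin n) (Fin m × Fin n') ℝ)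
    (hP : ∀ a i b j, P (a, i) (b, j) = if a = b then (1 / (m : ℝ)) * Q a i j else 0) :
    kprank k P ≤ m ∧ (k * m ≤ prank P → kprank k P = m) := by
  have hfac : ∀ a, HasPsdFac (Q a) k := by
    intro a
    have hne : {r | HasPsdFac (Q a) r}.Nonempty := ⟨n', aux_psdFac_exists (Q a) (hQ a)⟩
    exact aux_psdFac_mono (hQrank a) (Nat.sInf_mem hne)
  choose C D hCpsd hDpsd hCD using hfac
  have hblock : HasBlockPsdFac k P m := by
    refine ⟨fun p l => if p.1 = l then C p.1 p.2 else 0,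
      fun q l => if q.1 = l then (((1 : ℝ) / (m : ℝ) : ℝ) : ℂ) • D q.1 q.2 else 0, ?_, ?_, ?_⟩
    · intro p l
      by_cases h : p.1 = l
      · simpa [h] using hCpsd p.1 p.2
      · simpa [h] using Matrix.PosSemidef.zero
    · intro q l
      by_cases h : q.1 = l
      · simpa [h] using aux_psd_smul (hDpsd q.1 q.2) (one_div_nonneg.mpr (Nat.cast_nonneg m))
      · simpa [h] using Matrix.PosSemidef.zero
    · rintro ⟨a, i⟩ ⟨b, j⟩
      by_cases hab : a = b
      · subst hab
        rw [hP, if_pos rfl, Finset.sum_eq_single a]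
        · have e1 : (fun (p : Fin m × Fin n) (l : Fin m) => if p.1 = l then C p.1 p.2 else 0)
              (a, i) a = C a i := if_pos rfl
          have e2 : (fun (q : Fin m × Fin n') (l : Fin m) =>
              if q.1 = l then (((1 : ℝ) / (m : ℝ) : ℝ) : ℂ) • D q.1 q.2 else 0) (a, j) a
              = (((1 : ℝ) / (m : ℝ) : ℝ) : ℂ) • D a j := if_pos rfl
          rw [e1, e2, Matrix.mul_smul, Matrix.trace_smul, ← hCD a i j, smul_eq_mul]
          push_cast
          ring
        · intro l _ hl
          have h1 : a ≠ l := fun h => hl h.symm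
          simp [h1]
        · intro h; exact absurd (Finset.mem_univ _) h
      · rw [hP, if_neg hab]
        rw [eq_comm]
        push_cast
        apply Finset.sum_eq_zero
        intro l _
        by_cases h1 : a = l <;> by_cases h2 : b = l <;>
          simp [h1, h2]
        exact absurd (h1.trans h2.symm) hab
  have hub : kprank k P ≤ m := Nat.sInf_le hblock
  refine ⟨hub, fun hkm => ?_⟩
  have hne : {r | HasBlockPsdFac k P r}.Nonempty := ⟨m, hblock⟩
  have hmem : HasBlockPsdFac k P (kprank k P) := Nat.sInf_mem hne
  have h1 : prank P ≤ k * kprank k P := Nat.sInf_le (aux_block_to_psd hmem)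
  have h2 : k * m ≤ k * kprank k P := hkm.trans h1
  have h3 := Nat.le_of_mul_le_mul_left h2 (by omega)
  omega
end

section
/- Let n ≥ 64 and let Q ∈ ℝ_{≥0}^{n×n} be a nonnegative matrix with Q(i,i) = 0 for all i, Q(i,j) > 0 for all i ≠ j, and nonnegative rank rank₊(Q) ≥ 2√n − 2. If Q⊗Q = Σ_{k=1}^{r} P_k, where each P_k ∈ ℝ_{≥0}^{n²×n²} is a nonnegative matrix with PSD-rank prank(P_k) ≤ 2, then r ≥ log₂ n. -/
open Matrix BigOperators Kronecker
open scoped ComplexOrder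

namespace Stmt6Aux

lemma eq_zero_of_trace_conjTranspose_mul_self {s : ℕ} (M : Matrix (Fin s) (Fin s) ℂ)
    (h : (Mᴴ * M).trace = 0) : M = 0 := by
  have key : (Mᴴ * M).trace = ((∑ j : Fin s, ∑ i : Fin s, Complex.normSq (M i j) : ℝ) : ℂ) := by
    push_cast
    simp only [Matrix.trace, Matrix.diag, Matrix.mul_apply, Matrix.conjTranspose_apply]
    refine Finset.sum_congr rfl fun j _ => Finset.sum_congr rfl fun i _ => ?_
    rw [Complex.star_def, mul_comm, Complex.mul_conj]
  rw [key] at h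
  have h2 : (∑ j : Fin s, ∑ i : Fin s, Complex.normSq (M i j) : ℝ) = 0 := by exact_mod_cast h
  ext i j
  have h3 := (Finset.sum_eq_zero_iff_of_nonneg (fun j _ => Finset.sum_nonneg
      (fun i _ => Complex.normSq_nonneg (M i j)))).mp h2 j (Finset.mem_univ j)
  have h4 := (Finset.sum_eq_zero_iff_of_nonneg
      (fun i _ => Complex.normSq_nonneg (M i j))).mp h3 i (Finset.mem_univ i)
  simpa using Complex.normSq_eq_zero.mp h4

open scoped MatrixOrder Matrix.Norms.L2Operator in
lemma exists_herm_sqrt {s : ℕ} {C : Matrix (Fin s) (Fin s) ℂ} (hC : C.PosSemidef) :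
    ∃ X : Matrix (Fin s) (Fin s) ℂ, X * X = C ∧ X.IsHermitian :=
  ⟨CFC.sqrt C, CFC.sqrt_mul_sqrt_self C hC.nonneg, (CFC.sqrt_nonneg C).posSemidef.1⟩

lemma mul_eq_zero_of_psd_trace {s : ℕ} {C D : Matrix (Fin s) (Fin s) ℂ}
    (hC : C.PosSemidef) (hD : D.PosSemidef) (h : (C * D).trace = 0) : C * D = 0 := by
  obtain ⟨SC, hc, hch⟩ := exists_herm_sqrt hC
  obtain ⟨SD, hd, hdh⟩ := exists_herm_sqrt hD
  set M := SC * SD with hM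
  have hMH : Mᴴ = SD * SC := by
    rw [hM, Matrix.conjTranspose_mul, hch.eq, hdh.eq]
  have htr : (Mᴴ * M).trace = 0 := by
    rw [hMH, hM]
    calc (SD * SC * (SC * SD)).trace
        = (SD * (SC * SC * SD)).trace := by
          simp only [Matrix.mul_assoc]
      _ = ((SC * SC * SD) * SD).trace := Matrix.trace_mul_comm _ _
      _ = (C * D).trace := by rw [Matrix.mul_assoc, hc, hd]
      _ = 0 := h
  have hM0 : M = 0 := eq_zero_of_trace_conjTranspose_mul_self M htr
  have hfin : C * D = SC * (M * SD) := by
    conv_lhs => rw [← hc, ← hd]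
    simp only [hM, Matrix.mul_assoc]
  rw [hfin, hM0]
  simp

/-- Every matrix in the family is a nonnegative multiple of a single rank-one projector. -/
def Light {s : ℕ} {ι : Type} (F : ι → Matrix (Fin s) (Fin s) ℂ) : Prop :=
  ∃ v : Fin s → ℂ, ∀ a, ∃ c : ℂ, 0 ≤ c ∧ F a = c • vecMulVec v (star v)

lemma diag_nonneg {s : ℕ} {E : Matrix (Fin s) (Fin s) ℂ} (hE : E.PosSemidef) (i : Fin s) :
    0 ≤ E i i := by
  have := hE.dotProduct_mulVec_nonneg (Pi.single i 1)
  simpa [dotProduct, Matrix.mulVec, Pi.single_apply] using this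

lemma re_ofReal_of_nonneg {z : ℂ} (h : 0 ≤ z) : ((z.re : ℝ) : ℂ) = z := by
  have h1 := Complex.le_def.mp h
  apply Complex.ext <;> simp [← h1.2]

lemma re_nonneg_of_nonneg {z : ℂ} (h : 0 ≤ z) : 0 ≤ z.re := by
  simpa using (Complex.le_def.mp h).1

lemma rank1_of_kernel (E : Matrix (Fin 2) (Fin 2) ℂ) (hE : E.PosSemidef)
    (w : Fin 2 → ℂ) (hw : w ≠ 0) (hker : E.mulVec w = 0) :
    ∃ c : ℂ, 0 ≤ c ∧ E = c • vecMulVec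
      ![-(starRingEnd ℂ (w 1)), starRingEnd ℂ (w 0)]
      (star ![-(starRingEnd ℂ (w 1)), starRingEnd ℂ (w 0)]) := by
  have herm : ∀ i j, starRingEnd ℂ (E j i) = E i j := fun i j => by
    rw [starRingEnd_apply]; exact hE.1.apply i j
  have eq0 : E 0 0 * w 0 + E 0 1 * w 1 = 0 := by
    have := congrFun hker 0
    simpa [Matrix.mulVec, dotProduct, Fin.sum_univ_two] using this
  have eq1 : E 1 0 * w 0 + E 1 1 * w 1 = 0 := by
    have := congrFun hker 1
    simpa [Matrix.mulVec, dotProduct, Fin.sum_univ_two] using this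
  have h00 : 0 ≤ E 0 0 := diag_nonneg hE 0
  have h11 : 0 ≤ E 1 1 := diag_nonneg hE 1
  by_cases hw1 : w 1 = 0
  · have hw0 : w 0 ≠ 0 := by
      intro h0; apply hw; funext i; fin_cases i <;> assumption
    have hE00 : E 0 0 = 0 := by
      have h := eq0; rw [hw1, mul_zero, add_zero, mul_eq_zero] at h; tauto
    have hE10 : E 1 0 = 0 := by
      have h := eq1; rw [hw1, mul_zero, add_zero, mul_eq_zero] at h; tauto
    have hE01 : E 0 1 = 0 := by rw [← herm 0 1, hE10, map_zero]
    have hN : ((Complex.normSq (w 0) : ℝ) : ℂ) = w 0 * starRingEnd ℂ (w 0) :=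
      (Complex.mul_conj _).symm
    have hNne : Complex.normSq (w 0) ≠ 0 := by simpa using hw0
    refine ⟨(((E 1 1).re / Complex.normSq (w 0) : ℝ) : ℂ), ?_, ?_⟩
    · rw [Complex.zero_le_real]
      exact div_nonneg (re_nonneg_of_nonneg h11) (Complex.normSq_nonneg _)
    · ext i j
      fin_cases i <;> fin_cases j <;>
        simp only [Fin.isValue, Matrix.smul_apply, Matrix.vecMulVec_apply, Pi.star_apply,
          Matrix.cons_val_zero, Matrix.cons_val_one, Matrix.head_cons, smul_eq_mul,
          Complex.star_def, map_neg, Complex.ofReal_div, Fin.zero_eta, Fin.mk_one,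
          RingHomCompTriple.comp_apply, RingHom.id_apply, Complex.conj_conj]
      · rw [hE00, hw1]; simp
      · rw [hE01, hw1]; simp
      · rw [hE10, hw1]; simp
      · rw [re_ofReal_of_nonneg h11, div_mul_eq_mul_div,
          eq_div_iff (by exact_mod_cast hNne), hN]
        ring
  · have hcw1 : starRingEnd ℂ (w 1) ≠ 0 := by simpa using hw1
    have hN : ((Complex.normSq (w 1) : ℝ) : ℂ) = w 1 * starRingEnd ℂ (w 1) :=
      (Complex.mul_conj _).symm
    have hNne : (((Complex.normSq (w 1) : ℝ)) : ℂ) ≠ 0 := by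
      rw [hN]; exact mul_ne_zero hw1 hcw1
    have eq0c : E 0 0 * starRingEnd ℂ (w 0) + E 1 0 * starRingEnd ℂ (w 1) = 0 := by
      have h := congrArg (starRingEnd ℂ) eq0
      simp only [map_add, _root_.map_mul, map_zero] at h
      rwa [herm 0 0, herm 1 0] at h
    refine ⟨(((E 0 0).re / Complex.normSq (w 1) : ℝ) : ℂ), ?_, ?_⟩
    · rw [Complex.zero_le_real]
      exact div_nonneg (re_nonneg_of_nonneg h00) (Complex.normSq_nonneg _)
    · have ha : (((E 0 0).re : ℝ) : ℂ) = E 0 0 := re_ofReal_of_nonneg h00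
      ext i j
      fin_cases i <;> fin_cases j <;>
        simp only [Fin.isValue, Matrix.smul_apply, Matrix.vecMulVec_apply, Pi.star_apply,
          Matrix.cons_val_zero, Matrix.cons_val_one, Matrix.head_cons, smul_eq_mul,
          Complex.star_def, map_neg, Complex.ofReal_div, Fin.zero_eta, Fin.mk_one,
          RingHomCompTriple.comp_apply, RingHom.id_apply, Complex.conj_conj] <;>
        rw [ha, div_mul_eq_mul_div, eq_div_iff hNne, hN]
      · ring
      · linear_combination (starRingEnd ℂ (w 1)) * eq0
      · linear_combination (w 1) * eq0c
      · linear_combination (starRingEnd ℂ (w 1)) * eq1 - (w 0) * eq0c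
  

lemma dichotomy {m : ℕ} (hm : m ≤ 2) {ι κ : Type}
    (C : ι → Matrix (Fin m) (Fin m) ℂ) (D : κ → Matrix (Fin m) (Fin m) ℂ)
    (hC : ∀ a, (C a).PosSemidef) (hD : ∀ b, (D b).PosSemidef)
    (h0 : ∀ a b, C a * D b = 0) : Light C ∨ Light D := by
  by_cases hD0 : ∀ b, D b = 0
  · right; exact ⟨0, fun b => ⟨0, le_refl 0, by simp [hD0 b]⟩⟩
  · push_neg at hD0; obtain ⟨b₀, hb₀⟩ := hD0
    have hex : ∃ p q, D b₀ p q ≠ 0 := by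
      by_contra hcon; push_neg at hcon
      exact hb₀ (by ext p q; simpa using hcon p q)
    obtain ⟨p, q, hpq⟩ := hex
    have hwne : (fun i => D b₀ i q) ≠ (0 : Fin m → ℂ) := fun h => hpq (congrFun h p)
    have hker : ∀ a, (C a).mulVec (fun i => D b₀ i q) = 0 := by
      intro a
      have h2 : (C a).mulVec ((D b₀).mulVec (Pi.single q 1)) = 0 := by
        rw [Matrix.mulVec_mulVec, h0 a b₀, Matrix.zero_mulVec]
      have h3 : (D b₀).mulVec (Pi.single q 1) = fun i => D b₀ i q := by
        funext i; simp
      rwa [h3] at h2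
    left
    interval_cases m
    · exact ⟨0, fun a => ⟨0, le_refl 0, by ext i j; exact i.elim0⟩⟩
    · refine ⟨fun _ => 1, fun a => ⟨C a 0 0, diag_nonneg (hC a) 0, ?_⟩⟩
      ext i j
      fin_cases i; fin_cases j
      simp [Matrix.vecMulVec_apply]
    · exact ⟨_, fun a => rank1_of_kernel (C a) (hC a) _ hwne (hker a)⟩

lemma trace_mul_vecMulVec {s : ℕ} (M : Matrix (Fin s) (Fin s) ℂ) (v : Fin s → ℂ) :
    (M * vecMulVec v (star v)).trace = dotProduct (star v) (M.mulVec v) := by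
  simp only [Matrix.trace, Matrix.diag, Matrix.mul_apply, Matrix.vecMulVec_apply,
    dotProduct, Matrix.mulVec, Pi.star_apply]
  refine Finset.sum_congr rfl fun i _ => ?_
  rw [Finset.mul_sum]
  refine Finset.sum_congr rfl fun j _ => by ring

lemma exists_psdFac {α β : Type} [Fintype α] [Fintype β] [DecidableEq β]
    (P : Matrix α β ℝ) (h : ∀ i j, 0 ≤ P i j) : HasPsdFac P (Fintype.card β) := by
  classical
  let e := Fintype.equivFin β
  refine ⟨fun i => Matrix.diagonal (fun l => ((P i (e.symm l) : ℝ) : ℂ)),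
          fun j => Matrix.diagonal (fun l => if l = e j then 1 else 0), ?_, ?_, ?_⟩
  · intro i
    refine Matrix.posSemidef_diagonal_iff.mpr fun l => ?_
    rw [Complex.zero_le_real]; exact h i _
  · intro j
    refine Matrix.posSemidef_diagonal_iff.mpr fun l => ?_
    by_cases hl : l = e j <;> simp [hl]
  · intro i j
    rw [Matrix.diagonal_mul_diagonal, Matrix.trace_diagonal]
    rw [Finset.sum_eq_single (e j)]
    · simp
    · intro b _ hb; simp [hb]
    · intro hb; exact absurd (Finset.mem_univ _) hb

lemma log_arith {n : ℕ} (hn : 64 ≤ n) : Real.logb 2 n ≤ 2 * Real.sqrt n - 2 := by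
  have hn1 : (64:ℝ) ≤ n := by exact_mod_cast hn
  have hnpos : (0:ℝ) < n := by linarith
  set s := Real.sqrt n with hs
  have hs8 : 8 ≤ s := by
    rw [hs, show (8:ℝ) = Real.sqrt 64 by
      rw [show (64:ℝ) = 8^2 by norm_num, Real.sqrt_sq (by norm_num : (0:ℝ) ≤ 8)]]
    exact Real.sqrt_le_sqrt hn1
  have hspos : (0:ℝ) < s := by linarith
  have hlogn : Real.log n = 2 * Real.log s := by
    rw [← Real.sq_sqrt hnpos.le, ← hs, Real.log_pow]
    push_cast; ring
  have hlogs : Real.log s ≤ 3 * Real.log 2 + (s / 8 - 1) := by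
    have h1 : Real.log (s/8) ≤ s/8 - 1 := Real.log_le_sub_one_of_pos (by positivity)
    have h2 : Real.log s = Real.log (s/8) + Real.log 8 := by
      rw [← Real.log_mul (by positivity) (by norm_num)]
      norm_num
    have h3 : Real.log 8 = 3 * Real.log 2 := by
      rw [show (8:ℝ) = 2^3 by norm_num, Real.log_pow]; push_cast; ring
    linarith
  have hl2 : (0.6931471803 : ℝ) < Real.log 2 := Real.log_two_gt_d9
  have hl2' : Real.log 2 < 0.6931471808 := Real.log_two_lt_d9
  rw [← Real.log_div_log, div_le_iff₀ (by linarith : (0:ℝ) < Real.log 2), hlogn]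
  nlinarith [mul_le_mul_of_nonneg_left hs8 (by linarith : (0:ℝ) ≤ Real.log 2)]

end Stmt6Aux

open Stmt6Aux in
theorem stmt6 {n : ℕ} (hn : 64 ≤ n)
    (Q : Matrix (Fin n) (Fin n) ℝ)
    (hdiag : ∀ i, Q i i = 0) (hoff : ∀ i j, i ≠ j → 0 < Q i j)
    (hnnr : 2 * Real.sqrt n - 2 ≤ (nnRank Q : ℝ))
    (r : ℕ) (P : Fin r → Matrix (Fin n × Fin n) (Fin n × Fin n) ℝ)
    (hPnn : ∀ k x y, 0 ≤ P k x y) (hPrank : ∀ k, prank (P k) ≤ 2)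
    (hsum : Q ⊗ₖ Q = ∑ k, P k) :
    Real.logb 2 n ≤ (r : ℝ) := by
  classical
  have hfac : ∀ k, ∃ m, m ≤ 2 ∧ HasPsdFac (P k) m := by
    intro k
    have hne : {s | HasPsdFac (P k) s}.Nonempty :=
      ⟨Fintype.card (Fin n × Fin n), exists_psdFac (P k) (hPnn k)⟩
    exact ⟨prank (P k), hPrank k, Nat.sInf_mem hne⟩
  choose m hm2 C D hC hD htr using hfac
  have hzero : ∀ (k : Fin r) (i a b : Fin n), C k (i,a) * D k (i,b) = 0 := by
    intro k i a b
    apply mul_eq_zero_of_psd_trace (hC k (i,a)) (hD k (i,b))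
    have hs := congrFun (congrFun hsum (i,a)) (i,b)
    rw [Matrix.kroneckerMap_apply, hdiag i, zero_mul, Matrix.sum_apply] at hs
    have hP0 : P k (i,a) (i,b) = 0 := by
      have := (Finset.sum_eq_zero_iff_of_nonneg
        (fun k' _ => hPnn k' (i,a) (i,b))).mp hs.symm k (Finset.mem_univ k)
      exact this
    rw [← htr k (i,a) (i,b), hP0, Complex.ofReal_zero]
  have hdich : ∀ (k : Fin r) (i : Fin n),
      Light (fun a => C k (i,a)) ∨ Light (fun b => D k (i,b)) :=
    fun k i => dichotomy (hm2 k) _ _ (fun a => hC k (i,a)) (fun b => hD k (i,b))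
      (fun a b => hzero k i a b)
  by_cases hcov : ∀ i j : Fin n, i ≠ j →
      ∃ k, ¬ Light (fun a => C k (i,a)) ∧ ¬ Light (fun b => D k (j,b))
  · -- covering branch : n ≤ 2 ^ r
    have hinj : Function.Injective
        (fun (i : Fin n) => (fun k => Light (fun a => C k (i,a)) : Fin r → Prop)) := by
      intro i j hij
      by_contra hne
      obtain ⟨k, hCi, hDj⟩ := hcov i j hne
      have hLj : Light (fun a => C k (j,a)) := (hdich k j).resolve_right hDj
      have h3 : Light (fun a => C k (i,a)) = Light (fun a => C k (j,a)) := congrFun hij k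
      exact hCi (h3 ▸ hLj)
    have hcard : n ≤ 2 ^ r := by
      have h1 := Fintype.card_le_of_injective _ hinj
      simpa [Fintype.card_fun, Fintype.card_prop] using h1
    have h2r : (n:ℝ) ≤ (2:ℝ)^r := by exact_mod_cast hcard
    have hnpos : (0:ℝ) < n := by
      have : (64:ℝ) ≤ n := by exact_mod_cast hn
      linarith
    have hlog : Real.log n ≤ r * Real.log 2 := by
      calc Real.log n ≤ Real.log ((2:ℝ)^r) := Real.log_le_log hnpos h2r
        _ = r * Real.log 2 := by rw [Real.log_pow]
    rw [← Real.log_div_log, div_le_iff₀ (Real.log_pos (by norm_num))]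
    exact hlog
  · -- good-pair branch : nnRank Q ≤ r
    push_neg at hcov
    obtain ⟨i, j, hij, hk⟩ := hcov
    have hQij : 0 < Q i j := hoff i j hij
    have hrank1 : ∀ k, ∃ (u : Fin n → ℝ) (v : Fin n → ℝ), (∀ a, 0 ≤ u a) ∧ (∀ b, 0 ≤ v b) ∧
        ∀ a b, P k (i,a) (j,b) = u a * v b := by
      intro k
      rcases or_iff_not_imp_left.mpr (hk k) with hL | hL
      · obtain ⟨v0, hv0⟩ := hL
        choose c hc0 hceq using hv0
        have hceq2 : ∀ a, C k (i,a) = c a • vecMulVec v0 (star v0) := hceq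
        refine ⟨fun a => (c a).re,
          fun b => (dotProduct (star v0) ((D k (j,b)).mulVec v0)).re,
          fun a => re_nonneg_of_nonneg (hc0 a),
          fun b => re_nonneg_of_nonneg ((hD k (j,b)).dotProduct_mulVec_nonneg v0), ?_⟩
        intro a b
        have hcx : (P k (i,a) (j,b) : ℂ) =
            c a * dotProduct (star v0) ((D k (j,b)).mulVec v0) := by
          rw [htr k (i,a) (j,b), hceq2 a, Matrix.smul_mul, Matrix.trace_smul,
            Matrix.trace_mul_comm, trace_mul_vecMulVec, smul_eq_mul]
        rw [← re_ofReal_of_nonneg (hc0 a),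
          ← re_ofReal_of_nonneg ((hD k (j,b)).dotProduct_mulVec_nonneg v0), ← Complex.ofReal_mul] at hcx
        exact_mod_cast hcx
      · obtain ⟨v0, hv0⟩ := hL
        choose c hc0 hceq using hv0
        have hceq2 : ∀ b, D k (j,b) = c b • vecMulVec v0 (star v0) := hceq
        refine ⟨fun a => (dotProduct (star v0) ((C k (i,a)).mulVec v0)).re,
          fun b => (c b).re,
          fun a => re_nonneg_of_nonneg ((hC k (i,a)).dotProduct_mulVec_nonneg v0),
          fun b => re_nonneg_of_nonneg (hc0 b), ?_⟩
        intro a b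
        have hcx : (P k (i,a) (j,b) : ℂ) =
            dotProduct (star v0) ((C k (i,a)).mulVec v0) * c b := by
          rw [htr k (i,a) (j,b), hceq2 b, Matrix.mul_smul, Matrix.trace_smul,
            trace_mul_vecMulVec, smul_eq_mul]
          ring
        rw [← re_ofReal_of_nonneg (hc0 b),
          ← re_ofReal_of_nonneg ((hC k (i,a)).dotProduct_mulVec_nonneg v0), ← Complex.ofReal_mul] at hcx
        exact_mod_cast hcx
    choose u v hu hv huv using hrank1
    have hmem : nnRank Q ≤ r := by
      apply Nat.sInf_le
      refine ⟨fun k a => u k a / Q i j, fun k b => v k b,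
        fun k a => div_nonneg (hu k a) hQij.le, hv, ?_⟩
      intro a b
      have hs := congrFun (congrFun hsum (i,a)) (j,b)
      rw [Matrix.kroneckerMap_apply, Matrix.sum_apply] at hs
      have hsum2 : Q i j * Q a b = ∑ k, u k a * v k b := by
        rw [hs]
        exact Finset.sum_congr rfl fun k _ => huv k a b
      have heq : ∑ k, u k a / Q i j * v k b = (∑ k, u k a * v k b) / Q i j := by
        rw [Finset.sum_div]
        exact Finset.sum_congr rfl fun k _ => by ring
      rw [heq, ← hsum2, mul_div_cancel_left₀ _ hQij.ne']
    have hr : (nnRank Q : ℝ) ≤ r := by exact_mod_cast hmem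
    linarith [log_arith hn, hnnr]
end

section
/- Let n ≥ 64 and let Q ∈ ℝ_{≥0}^{n×n} be a nonnegative matrix with Q(i,i) = 0 for all i, Q(i,j) > 0 for all i ≠ j, and nonnegative rank rank₊(Q) ≥ 2√n − 2. If Q⊗Q = Σ_{k=1}^{r} P_k, where each P_k ∈ ℝ_{≥0}^{n²×n²} is a nonnegative matrix with PSD-rank prank(P_k) ≤ 3, then r ≥ log₂ n. -/
open Matrix BigOperators Kronecker
open scoped ComplexOrder

namespace StmtAux

open Module

noncomputable def outer {m : ℕ} (u : Fin m → ℂ) : Matrix (Fin m) (Fin m) ℂ :=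
  Matrix.of fun p q => u p * star (u q)

lemma outer_apply {m : ℕ} (u : Fin m → ℂ) (p q) : outer u p q = u p * star (u q) := rfl

lemma outer_mulVec {m : ℕ} (u x : Fin m → ℂ) :
    outer u *ᵥ x = (star u ⬝ᵥ x) • u := by
  funext p
  simp only [outer, Matrix.mulVec, dotProduct, Pi.smul_apply, smul_eq_mul,
    Matrix.of_apply, Pi.star_apply]
  rw [Finset.sum_mul]
  exact Finset.sum_congr rfl fun q _ => by ring

lemma trace_outer_mul {m : ℕ} (u : Fin m → ℂ) (M : Matrix (Fin m) (Fin m) ℂ) :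
    (outer u * M).trace = star u ⬝ᵥ (M *ᵥ u) := by
  simp only [Matrix.trace, Matrix.diag, Matrix.mul_apply, outer_apply, dotProduct,
    Matrix.mulVec, Finset.mul_sum]
  rw [Finset.sum_comm]
  exact Finset.sum_congr rfl fun q _ => Finset.sum_congr rfl fun p _ => by
    simp [Pi.star_apply]; ring

lemma trace_conjTranspose_mul_self_eq_zero {m : ℕ} {X : Matrix (Fin m) (Fin m) ℂ}
    (h : (Xᴴ * X).trace = 0) : X = 0 := by
  have hnn : ∀ p ∈ (Finset.univ : Finset (Fin m)), (0:ℂ) ≤ ∑ q, star (X q p) * X q p :=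
    fun p _ => Finset.sum_nonneg fun q _ => star_mul_self_nonneg _
  have htr : ∑ p, ∑ q, star (X q p) * X q p = 0 := by
    rw [← h]
    simp [Matrix.trace, Matrix.diag, Matrix.mul_apply, Matrix.conjTranspose_apply]
  ext q p
  have h1 := (Finset.sum_eq_zero_iff_of_nonneg hnn).mp htr p (Finset.mem_univ p)
  have h2 := (Finset.sum_eq_zero_iff_of_nonneg
    (fun q _ => star_mul_self_nonneg (X q p))).mp h1 q (Finset.mem_univ q)
  have h3 : (starRingEnd ℂ) (X q p) * X q p = 0 := h2
  have h4 : ((Complex.normSq (X q p) : ℝ) : ℂ) = 0 := by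
    rw [← Complex.normSq_eq_conj_mul_self] at h3; exact_mod_cast h3
  have h5 : Complex.normSq (X q p) = 0 := by exact_mod_cast h4
  simpa using Complex.normSq_eq_zero.mp h5

open scoped MatrixOrder in
lemma psd_eq_ct_mul {m : ℕ} {C : Matrix (Fin m) (Fin m) ℂ} (hC : C.PosSemidef) :
    ∃ A : Matrix (Fin m) (Fin m) ℂ, C = Aᴴ * A := by
  obtain ⟨B, hB⟩ := CStarAlgebra.nonneg_iff_eq_star_mul_self.mp hC.nonneg
  exact ⟨B, by simpa [Matrix.star_eq_conjTranspose] using hB⟩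

lemma mul_eq_zero_of_trace_mul_eq_zero {m : ℕ} {C D : Matrix (Fin m) (Fin m) ℂ}
    (hC : C.PosSemidef) (hD : D.PosSemidef) (h : (C * D).trace = 0) : C * D = 0 := by
  obtain ⟨A, rfl⟩ := psd_eq_ct_mul hC
  obtain ⟨B, rfl⟩ := psd_eq_ct_mul hD
  have key : (A * Bᴴ) = 0 := by
    apply trace_conjTranspose_mul_self_eq_zero
    rw [Matrix.conjTranspose_mul, Matrix.conjTranspose_conjTranspose]
    have e1 : (B * Aᴴ) * (A * Bᴴ) = B * ((Aᴴ * A) * Bᴴ) := by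
      simp only [Matrix.mul_assoc]
    have e2 : (Aᴴ * A) * (Bᴴ * B) = ((Aᴴ * A) * Bᴴ) * B := by
      simp only [Matrix.mul_assoc]
    rw [e1, Matrix.trace_mul_comm, ← e2, h]
  have e3 : (Aᴴ * A) * (Bᴴ * B) = Aᴴ * ((A * Bᴴ) * B) := by
    simp only [Matrix.mul_assoc]
  rw [e3, key, Matrix.zero_mul, Matrix.mul_zero]


lemma psd_sum {ι : Type} [Fintype ι] {m : ℕ} (h : ι → Matrix (Fin m) (Fin m) ℂ)
    (hp : ∀ a, (h a).PosSemidef) : (∑ a, h a).PosSemidef := by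
  classical
  exact Finset.sum_induction h _ (fun a b ha hb => ha.add hb) Matrix.PosSemidef.zero
    (fun a _ => hp a)

lemma rank_add_rank_le {m : ℕ} {F G : Matrix (Fin m) (Fin m) ℂ} (h : F * G = 0) :
    F.rank + G.rank ≤ m := by
  have hle : LinearMap.range G.mulVecLin ≤ LinearMap.ker F.mulVecLin := by
    rintro x ⟨y, rfl⟩
    simp only [LinearMap.mem_ker]
    have : (F * G).mulVecLin y = 0 := by rw [h]; simp
    rwa [Matrix.mulVecLin_mul, LinearMap.comp_apply] at this
  have h1 : finrank ℂ (LinearMap.range G.mulVecLin) ≤ finrank ℂ (LinearMap.ker F.mulVecLin) :=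
    Submodule.finrank_mono hle
  have h2 := LinearMap.finrank_range_add_finrank_ker F.mulVecLin
  have h3 : finrank ℂ (Fin m → ℂ) = m := by simp
  rw [h3] at h2
  rw [Matrix.rank, Matrix.rank]
  omega

lemma col_mem_range {m : ℕ} (F : Matrix (Fin m) (Fin m) ℂ) (k : Fin m) :
    (fun j => F j k) ∈ LinearMap.range F.mulVecLin := by
  refine ⟨Pi.single k 1, ?_⟩
  rw [Matrix.mulVecLin_apply, Matrix.mulVec_single]
  funext j; simp

lemma psd_rank_le_one {m : ℕ} {F : Matrix (Fin m) (Fin m) ℂ} (hF : F.PosSemidef)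
    (hr : F.rank ≤ 1) (hne : F ≠ 0) :
    ∃ (c : ℝ) (u : Fin m → ℂ), 0 < c ∧ u ≠ 0 ∧ F = (c : ℂ) • outer u := by
  classical
  -- find a nonzero diagonal entry
  have hdiag : ∃ i₀, F i₀ i₀ ≠ 0 := by
    by_contra hcon
    push_neg at hcon
    apply hne
    obtain ⟨B, rfl⟩ := psd_eq_ct_mul hF
    have hB : B = 0 := by
      ext q i
      have h1 : ∑ p, star (B p i) * B p i = 0 := by
        have := hcon i
        simpa [Matrix.mul_apply, Matrix.conjTranspose_apply] using this
      have h2 := (Finset.sum_eq_zero_iff_of_nonneg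
        (fun p _ => star_mul_self_nonneg (B p i))).mp h1 q (Finset.mem_univ q)
      have h2' : (starRingEnd ℂ) (B q i) * B q i = 0 := h2
      have h3 : ((Complex.normSq (B q i) : ℝ) : ℂ) = 0 := by
        rw [Complex.normSq_eq_conj_mul_self]; exact h2'
      have h5 : Complex.normSq (B q i) = 0 := by exact_mod_cast h3
      simpa using Complex.normSq_eq_zero.mp h5
    rw [hB]; simp
  obtain ⟨i₀, hi₀⟩ := hdiag
  set u : Fin m → ℂ := fun j => F j i₀ with hu_def
  have hu0 : u ≠ 0 := fun hc => hi₀ (by simpa [hu_def] using congrFun hc i₀)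
  -- the range of F is spanned by u
  have humem : u ∈ LinearMap.range F.mulVecLin := col_mem_range F i₀
  have hspan : Submodule.span ℂ {u} = LinearMap.range F.mulVecLin := by
    apply Submodule.eq_of_le_of_finrank_le
    · rw [Submodule.span_le, Set.singleton_subset_iff]; exact humem
    · rw [finrank_span_singleton hu0]
      exact hr
  have hcols : ∀ k, ∃ lam : ℂ, (fun j => F j k) = lam • u := by
    intro k
    have := col_mem_range F k
    rw [← hspan, Submodule.mem_span_singleton] at this
    obtain ⟨a, ha⟩ := this
    exact ⟨a, ha.symm⟩
  -- the diagonal entry is a positive real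
  have ht_nonneg : (0:ℂ) ≤ F i₀ i₀ := by
    have := hF.dotProduct_mulVec_nonneg (Pi.single i₀ 1)
    have he : star (Pi.single i₀ 1 : Fin m → ℂ) ⬝ᵥ F *ᵥ Pi.single i₀ 1 = F i₀ i₀ := by
      rw [Matrix.mulVec_single]
      simp [dotProduct, Pi.single_apply, apply_ite (star : ℂ → ℂ)]
    rwa [he] at this
  have ht_re : ((F i₀ i₀).re : ℂ) = F i₀ i₀ := by
    rcases (Complex.le_def.mp ht_nonneg) with ⟨_, him⟩
    rw [Complex.ext_iff]; constructor <;> simp [← him]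
  have ht_pos : 0 < (F i₀ i₀).re := by
    rcases (Complex.le_def.mp ht_nonneg) with ⟨hre, _⟩
    simp only [Complex.zero_re] at hre
    rcases lt_or_eq_of_le hre with h | h
    · exact h
    · exfalso; apply hi₀; rw [← ht_re, ← h]; simp
  refine ⟨((F i₀ i₀).re)⁻¹, u, by positivity, hu0, ?_⟩
  ext j k
  obtain ⟨lam, hlam⟩ := hcols k
  have hFjk : F j k = lam * u j := by
    have := congrFun hlam j; simpa using this
  have hFi₀k : F i₀ k = lam * u i₀ := by
    have := congrFun hlam i₀; simpa using this
  have hconj : star (u k) = F i₀ k := by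
    have := hF.1
    have h := congrFun (congrFun this i₀) k
    simpa [Matrix.conjTranspose_apply, hu_def] using h
  have hui₀ : u i₀ = F i₀ i₀ := rfl
  simp only [Matrix.smul_apply, outer, Matrix.of_apply, smul_eq_mul]
  rw [hconj, hFjk, hFi₀k, hui₀]
  have : (((F i₀ i₀).re)⁻¹ : ℂ) * F i₀ i₀ = 1 := by
    rw [← ht_re]
    norm_cast
    rw [inv_mul_cancel₀ (ne_of_gt ht_pos)]
  push_cast
  calc lam * u j = (lam * u j) * ((((F i₀ i₀).re)⁻¹ : ℂ) * F i₀ i₀) := by rw [this, mul_one]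
  _ = (((F i₀ i₀).re)⁻¹ : ℂ) * (u j * (lam * F i₀ i₀)) := by ring


lemma eq_smul_outer {m : ℕ} {M : Matrix (Fin m) (Fin m) ℂ} (hM : M.PosSemidef)
    {u : Fin m → ℂ} (hu : u ≠ 0)
    (hkill : ∀ x, star u ⬝ᵥ x = 0 → M *ᵥ x = 0) :
    ∃ c : ℝ, 0 ≤ c ∧ M = (c : ℂ) • outer u := by
  classical
  set N : ℂ := star u ⬝ᵥ u with hN_def
  have hN0 : N ≠ 0 := fun hc => hu (dotProduct_star_self_eq_zero.mp hc)
  have hN_nonneg : (0:ℂ) ≤ N := Finset.sum_nonneg fun q _ => star_mul_self_nonneg _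
  set w : Fin m → ℂ := M *ᵥ u with hw_def
  -- every column of M is a multiple of w
  have hstep : ∀ x, M *ᵥ x = ((star u ⬝ᵥ x) / N) • w := by
    intro x
    have hx' : star u ⬝ᵥ (x - ((star u ⬝ᵥ x) / N) • u) = 0 := by
      rw [dotProduct_sub, dotProduct_smul]
      rw [smul_eq_mul, div_mul_cancel₀ _ hN0, sub_self]
    have := hkill _ hx'
    rw [Matrix.mulVec_sub, Matrix.mulVec_smul, sub_eq_zero] at this
    rw [this, hw_def]
  have hentry : ∀ j k, M j k = (star (u k) / N) * w j := by
    intro j k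
    have h1 : M *ᵥ Pi.single k 1 = ((star u ⬝ᵥ Pi.single k 1) / N) • w := hstep _
    have h2 : star u ⬝ᵥ (Pi.single k 1 : Fin m → ℂ) = star (u k) := by
      simp [dotProduct_single]
    have h3 := congrFun h1 j
    rw [Matrix.mulVec_single] at h3
    simpa [h2] using h3
  -- w is a multiple of u
  obtain ⟨k₀, hk₀⟩ : ∃ k₀, u k₀ ≠ 0 := by
    by_contra hc; push_neg at hc; exact hu (funext hc)
  have hNr : star N = N := by
    simp only [hN_def, dotProduct, star_sum, star_mul', star_star, Pi.star_apply]
    exact Finset.sum_congr rfl fun q _ => by ring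
  have hherm : ∀ j k, star (u k) * w j = u j * star (w k) := by
    intro j k
    have h := congrFun (congrFun hM.1 j) k
    rw [Matrix.conjTranspose_apply] at h
    have h1 : M j k = star (M k j) := h.symm
    rw [hentry j k, hentry k j] at h1
    rw [star_mul', star_div₀, star_star, hNr] at h1
    field_simp at h1
    simp only [Complex.star_def] at h1 ⊢
    linear_combination h1
  set lam : ℂ := star (w k₀) / star (u k₀) with hlam_def
  have hw_eq : ∀ j, w j = lam * u j := by
    intro j
    have := hherm j k₀
    rw [hlam_def]
    simp only [Complex.star_def] at this ⊢
    have hcne : (starRingEnd ℂ) (u k₀) ≠ 0 := by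
      simpa using hk₀
    rw [div_mul_eq_mul_div, eq_div_iff hcne]
    linear_combination this
  -- positivity
  have hpos : (0:ℂ) ≤ lam * N := by
    have h1 := hM.dotProduct_mulVec_nonneg u
    have h2 : star u ⬝ᵥ (M *ᵥ u) = lam * N := by
      rw [← hw_def, hN_def, dotProduct, dotProduct, Finset.mul_sum]
      exact Finset.sum_congr rfl fun q _ => by rw [hw_eq q]; ring
    rwa [h2] at h1
  obtain ⟨hre_s, him_s⟩ := Complex.le_def.mp hpos
  obtain ⟨hre_N, him_N⟩ := Complex.le_def.mp hN_nonneg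
  simp only [Complex.zero_re, Complex.zero_im] at hre_s him_s hre_N him_N
  have hNre : N = ((N.re : ℝ) : ℂ) := by rw [Complex.ext_iff]; constructor <;> simp [← him_N]
  have hNre_pos : 0 < N.re := by
    rcases lt_or_eq_of_le hre_N with h | h
    · exact h
    · exfalso; apply hN0; rw [hNre, ← h]; simp
  have hlamN : lam * N = (((lam * N).re : ℝ) : ℂ) := by
    rw [Complex.ext_iff]; constructor <;> simp [← him_s]
  refine ⟨(lam * N).re / (N.re * N.re), by positivity, ?_⟩
  ext j k
  simp only [Matrix.smul_apply, outer, Matrix.of_apply, smul_eq_mul]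
  rw [hentry j k, hw_eq j]
  have hNne : (N.re : ℂ) ≠ 0 := by exact_mod_cast ne_of_gt hNre_pos
  push_cast
  rw [← hlamN, hNre]
  field_simp
  rw [Complex.ofReal_re, eq_div_iff (pow_ne_zero 2 hNne)]
  ring


lemma flat_of_rank_sum_le_one {ι : Type} [Fintype ι] {m : ℕ}
    (h : ι → Matrix (Fin m) (Fin m) ℂ) (hp : ∀ a, (h a).PosSemidef)
    (hr : (∑ a, h a).rank ≤ 1) :
    ∃ u : Fin m → ℂ, ∀ a, ∃ c : ℝ, 0 ≤ c ∧ h a = (c : ℂ) • outer u := by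
  classical
  set F := ∑ a, h a with hF_def
  have hFpsd : F.PosSemidef := psd_sum h hp
  have hkey : ∀ x, star x ⬝ᵥ F *ᵥ x = 0 → ∀ a, h a *ᵥ x = 0 := by
    intro x hx a
    have hsum : ∑ b, star x ⬝ᵥ (h b) *ᵥ x = 0 := by
      have hsplit : (∑ b, h b) *ᵥ x = ∑ b, h b *ᵥ x := by
        induction (Finset.univ : Finset ι) using Finset.induction_on with
        | empty => simp [Matrix.mulVec]
        | insert _ _ hni ih => rw [Finset.sum_insert hni, Finset.sum_insert hni,
            Matrix.add_mulVec, ih]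
      rw [← hx, hF_def, hsplit]
      simp only [dotProduct, Finset.sum_apply, Finset.mul_sum]
      rw [Finset.sum_comm]
    have hzero := (Finset.sum_eq_zero_iff_of_nonneg
      (fun b _ => (hp b).dotProduct_mulVec_nonneg x)).mp hsum a (Finset.mem_univ a)
    exact ((hp a).dotProduct_mulVec_zero_iff x).mp hzero
  by_cases hF0 : F = 0
  · refine ⟨0, fun a => ⟨0, le_refl 0, ?_⟩⟩
    have hall : ∀ x, h a *ᵥ x = 0 := fun x => hkey x (by rw [hF0]; simp) a
    have hzero : h a = 0 := by
      ext j k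
      have := congrFun (hall (Pi.single k 1)) j
      rw [Matrix.mulVec_single] at this
      simpa using this
    rw [hzero]; simp
  · obtain ⟨c₀, u, hc₀, hu0, hFeq⟩ := psd_rank_le_one hFpsd hr hF0
    refine ⟨u, fun a => ?_⟩
    apply eq_smul_outer (hp a) hu0
    intro x hx
    apply hkey x _ a
    have hFx : F *ᵥ x = 0 := by
      rw [hFeq, Matrix.smul_mulVec, outer_mulVec, hx, zero_smul, smul_zero]
    rw [hFx, dotProduct_zero]

lemma dichotomy {ι : Type} [Fintype ι] {m : ℕ} (hm : m ≤ 3)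
    (f g : ι → Matrix (Fin m) (Fin m) ℂ)
    (hf : ∀ a, (f a).PosSemidef) (hg : ∀ b, (g b).PosSemidef)
    (hz : ∀ a b, ((f a) * (g b)).trace = 0) :
    (∃ u, ∀ a, ∃ c : ℝ, 0 ≤ c ∧ f a = (c : ℂ) • outer u) ∨
    (∃ v, ∀ b, ∃ c : ℝ, 0 ≤ c ∧ g b = (c : ℂ) • outer v) := by
  classical
  have hFG : (∑ a, f a) * (∑ b, g b) = 0 := by
    rw [Finset.sum_mul_sum]
    apply Finset.sum_eq_zero; intro a _
    apply Finset.sum_eq_zero; intro b _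
    exact mul_eq_zero_of_trace_mul_eq_zero (hf a) (hg b) (hz a b)
  have hrk := rank_add_rank_le hFG
  rcases le_or_gt (∑ a, f a).rank 1 with hle | hlt
  · exact Or.inl (flat_of_rank_sum_le_one f hf hle)
  · have hgle : (∑ b, g b).rank ≤ 1 := by omega
    exact Or.inr (flat_of_rank_sum_le_one g hg hgle)


lemma hasPsdFac_card {α β : Type} [Fintype α] [Fintype β] (P : Matrix α β ℝ)
    (hP : ∀ i j, 0 ≤ P i j) : HasPsdFac P (Fintype.card α) := by
  classical
  set e := Fintype.equivFin α
  refine ⟨fun i => Matrix.diagonal (fun p => if p = e i then 1 else 0),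
    fun j => Matrix.diagonal (fun p => ((P (e.symm p) j : ℝ) : ℂ)), ?_, ?_, ?_⟩
  · intro i
    rw [Matrix.posSemidef_diagonal_iff]
    intro p
    split <;> norm_num
  · intro j
    rw [Matrix.posSemidef_diagonal_iff]
    intro p
    rw [Complex.zero_le_real]
    exact hP _ _
  · intro i j
    rw [Matrix.diagonal_mul_diagonal, Matrix.trace_diagonal]
    rw [Finset.sum_eq_single (e i)]
    · simp
    · intro b _ hb; simp [hb]
    · intro hmem; exact absurd (Finset.mem_univ _) hmem


lemma log_bound {n : ℕ} (hn : 64 ≤ n) : Real.logb 2 (n : ℝ) ≤ 2 * Real.sqrt n - 2 := by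
  have hn0 : (0:ℝ) < n := by
    have h : (64:ℝ) ≤ n := by exact_mod_cast hn
    linarith
  set s := Real.sqrt (n:ℝ) with hs_def
  set a := Real.sqrt s with ha_def
  have hs_nonneg : 0 ≤ s := Real.sqrt_nonneg _
  have hs2 : s ^ 2 = (n:ℝ) := Real.sq_sqrt (le_of_lt hn0)
  have ha2 : a ^ 2 = s := Real.sq_sqrt hs_nonneg
  have ha_ge : (2.8:ℝ) ≤ a := by
    have h8 : (8:ℝ) ≤ s := by
      rw [hs_def]
      have h64 : (8:ℝ) = Real.sqrt 64 := by
        rw [show (64:ℝ) = 8^2 by norm_num, Real.sqrt_sq (by norm_num : (0:ℝ) ≤ 8)]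
      rw [h64]
      exact Real.sqrt_le_sqrt (by exact_mod_cast hn)
    calc (2.8:ℝ) = Real.sqrt (7.84) := by
          rw [show (7.84:ℝ) = 2.8^2 by norm_num,
            Real.sqrt_sq (by norm_num : (0:ℝ) ≤ 2.8)]
    _ ≤ Real.sqrt s := Real.sqrt_le_sqrt (by linarith)
  have ha_pos : (0:ℝ) < a := by linarith
  have hlog : Real.log (n:ℝ) ≤ 4 * (a - 1) := by
    have h1 : Real.log (n:ℝ) = 4 * Real.log a := by
      rw [← hs2, ← ha2, Real.log_pow, Real.log_pow]
      push_cast; ring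
    rw [h1]
    have := Real.log_le_sub_one_of_pos ha_pos
    linarith
  have hl2 : (0.6931:ℝ) < Real.log 2 := by
    have := Real.log_two_gt_d9; linarith
  rw [Real.logb, div_le_iff₀ (by linarith : (0:ℝ) < Real.log 2)]
  rw [← ha2]
  have hkey : 0 ≤ (2 * a ^ 2 - 2) * (Real.log 2 - 0.6931) :=
    mul_nonneg (by nlinarith) (by linarith)
  nlinarith [hkey, hlog, sq_nonneg (a - 2.8)]

end StmtAux

open StmtAux

theorem stmt7 {n : ℕ} (hn : 64 ≤ n)
    (Q : Matrix (Fin n) (Fin n) ℝ)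
    (hdiag : ∀ i, Q i i = 0) (hoff : ∀ i j, i ≠ j → 0 < Q i j)
    (hnnr : 2 * Real.sqrt n - 2 ≤ (nnRank Q : ℝ))
    (r : ℕ) (P : Fin r → Matrix (Fin n × Fin n) (Fin n × Fin n) ℝ)
    (hPnn : ∀ k x y, 0 ≤ P k x y) (hPrank : ∀ k, prank (P k) ≤ 3)
    (hsum : Q ⊗ₖ Q = ∑ k, P k) :
    Real.logb 2 n ≤ (r : ℝ) := by
  classical
  -- obtain optimal PSD factorizations
  have hfac : ∀ k, HasPsdFac (P k) (prank (P k)) := by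
    intro k
    have hmm : HasPsdFac (P k) (Fintype.card (Fin n × Fin n)) := hasPsdFac_card _ (hPnn k)
    exact Nat.sInf_mem (⟨_, hmm⟩ : {r' | HasPsdFac (P k) r'}.Nonempty)
  choose C D hC hD htr using hfac
  -- zero pattern on "diagonal" blocks
  have hzero : ∀ (k : Fin r) (i a b : Fin n), P k (i,a) (i,b) = 0 := by
    intro k i a b
    have h1 : (Q ⊗ₖ Q) (i,a) (i,b) = 0 := by
      rw [Matrix.kronecker_apply, hdiag i, zero_mul]
    have h2 : ∑ k', P k' (i,a) (i,b) = 0 := by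
      have := congrFun (congrFun hsum (i,a)) (i,b)
      rw [Matrix.sum_apply] at this
      rw [← this, h1]
    exact (Finset.sum_eq_zero_iff_of_nonneg
      (fun k' _ => hPnn k' _ _)).mp h2 k (Finset.mem_univ k)
  have htr0 : ∀ (k : Fin r) (i a b : Fin n),
      ((C k (i,a)) * (D k (i,b))).trace = 0 := by
    intro k i a b
    rw [← htr k (i,a) (i,b), hzero k i a b, Complex.ofReal_zero]
  -- the dichotomy for each part and block-row
  set CF : Fin r → Fin n → Prop := fun k i =>
    ∃ u, ∀ a, ∃ c : ℝ, 0 ≤ c ∧ C k (i,a) = (c : ℂ) • outer u with hCF_def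
  set DF : Fin r → Fin n → Prop := fun k i =>
    ∃ v, ∀ b, ∃ c : ℝ, 0 ≤ c ∧ D k (i,b) = (c : ℂ) • outer v with hDF_def
  have hdich : ∀ k i, CF k i ∨ DF k i := by
    intro k i
    exact dichotomy (hPrank k) (fun a => C k (i,a)) (fun b => D k (i,b))
      (fun a => hC k (i,a)) (fun b => hD k (i,b)) (fun a b => htr0 k i a b)
  by_cases hle : n ≤ 2 ^ r
  · have hx : (0:ℝ) < n := by
      have h : (64:ℝ) ≤ n := by exact_mod_cast hn
      linarith
    rw [Real.logb_le_iff_le_rpow one_lt_two hx, Real.rpow_natCast]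
    exact_mod_cast hle
  · push_neg at hle
    have hcard : Fintype.card (Fin r → Bool) < Fintype.card (Fin n) := by
      simpa using hle
    obtain ⟨i, j, hij, hcol⟩ := Fintype.exists_ne_map_eq_of_card_lt
      (fun i : Fin n => fun k => if CF k i then true else false) hcard
    -- per-part rank-one rectangles
    have key : ∀ k, ∃ (f g : Fin n → ℝ), (∀ a, 0 ≤ f a) ∧ (∀ b, 0 ≤ g b) ∧
        ∀ a b, P k (i,a) (j,b) = f a * g b := by
      intro k
      by_cases hCFk : CF k i
      · obtain ⟨u, hu⟩ := hCFk
        choose c hc0 hceq using hu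
        refine ⟨c, fun b => (star u ⬝ᵥ (D k (j,b)) *ᵥ u).re, hc0, ?_, ?_⟩
        · intro b
          obtain ⟨hre, _⟩ := Complex.le_def.mp ((hD k (j,b)).dotProduct_mulVec_nonneg u)
          simpa using hre
        · intro a b
          have hre : star u ⬝ᵥ (D k (j,b)) *ᵥ u
              = (((star u ⬝ᵥ (D k (j,b)) *ᵥ u).re : ℝ) : ℂ) := by
            obtain ⟨_, him⟩ := Complex.le_def.mp ((hD k (j,b)).dotProduct_mulVec_nonneg u)
            rw [Complex.ext_iff]
            constructor
            · simp
            · simpa using him.symm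
          have hc : (P k (i,a) (j,b) : ℂ)
              = ((c a * (star u ⬝ᵥ (D k (j,b)) *ᵥ u).re : ℝ) : ℂ) := by
            rw [htr k (i,a) (j,b), hceq a, Matrix.smul_mul, Matrix.trace_smul,
              trace_outer_mul, hre]
            simp [smul_eq_mul]
          exact_mod_cast hc
      · have hDFj : DF k j := by
          have hcolk := congrFun hcol k
          have hnot : ¬ CF k j := by
            intro hc
            rw [if_neg hCFk, if_pos hc] at hcolk
            exact Bool.noConfusion hcolk
          exact (hdich k j).resolve_left hnot
        obtain ⟨v, hv⟩ := hDFj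
        choose c hc0 hceq using hv
        refine ⟨fun a => (star v ⬝ᵥ (C k (i,a)) *ᵥ v).re, c, ?_, hc0, ?_⟩
        · intro a
          obtain ⟨hre, _⟩ := Complex.le_def.mp ((hC k (i,a)).dotProduct_mulVec_nonneg v)
          simpa using hre
        · intro a b
          have hre : star v ⬝ᵥ (C k (i,a)) *ᵥ v
              = (((star v ⬝ᵥ (C k (i,a)) *ᵥ v).re : ℝ) : ℂ) := by
            obtain ⟨_, him⟩ := Complex.le_def.mp ((hC k (i,a)).dotProduct_mulVec_nonneg v)
            rw [Complex.ext_iff]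
            constructor
            · simp
            · simpa using him.symm
          have hc : (P k (i,a) (j,b) : ℂ)
              = (((star v ⬝ᵥ (C k (i,a)) *ᵥ v).re * c b : ℝ) : ℂ) := by
            rw [htr k (i,a) (j,b), hceq b, Matrix.mul_smul, Matrix.trace_smul,
              Matrix.trace_mul_comm, trace_outer_mul, hre]
            simp [smul_eq_mul, mul_comm]
          exact_mod_cast hc
    choose f g hf0 hg0 hfg using key
    have hQij : 0 < Q i j := hoff i j hij
    have hQfac : ∀ a b, Q i j * Q a b = ∑ k, f k a * g k b := by
      intro a b
      have h1 := congrFun (congrFun hsum (i,a)) (j,b)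
      rw [Matrix.sum_apply] at h1
      rw [Matrix.kronecker_apply] at h1
      rw [h1]
      exact Finset.sum_congr rfl fun k _ => hfg k a b
    have hmem : r ∈ {r' | ∃ (u : Fin r' → Fin n → ℝ) (v : Fin r' → Fin n → ℝ),
        (∀ l i, 0 ≤ u l i) ∧ (∀ l j, 0 ≤ v l j) ∧
        ∀ i j, Q i j = ∑ l, u l i * v l j} := by
      refine ⟨fun k a => f k a / Q i j, g, ?_, hg0, ?_⟩
      · intro l a
        exact div_nonneg (hf0 l a) (le_of_lt hQij)
      · intro a b
        have : ∑ l, f l a / Q i j * g l b = (∑ l, f l a * g l b) / Q i j := by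
          rw [Finset.sum_div]
          exact Finset.sum_congr rfl fun l _ => by ring
        rw [this, ← hQfac a b, mul_comm (Q i j), mul_div_assoc,
          div_self (ne_of_gt hQij), mul_one]
    have hnnle : nnRank Q ≤ r := Nat.sInf_le hmem
    have h2 : (nnRank Q : ℝ) ≤ r := by exact_mod_cast hnnle
    have h3 := log_bound hn
    linarith
end

section
/- Let n ≥ 64 and let Q ∈ ℝ_{≥0}^{n×n} be a nonnegative matrix with Q(i,i) = 0 for all i, Q(i,j) > 0 for all i ≠ j, and nonnegative rank rank₊(Q) ≥ 2√n − 2. Then for every integer k ≥ 2: if Q^{⊗k} = Σ_{l=1}^{r} P_l, where each P_l is a nonnegative matrix with PSD-rank prank(P_l) ≤ 2^{k−1}, then r ≥ log₂ n. -/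
open Matrix BigOperators Kronecker
open scoped ComplexOrder

/-- The `k`-fold Kronecker power of a square matrix, indexed by tuples:
`(kronPow Q k) x y = ∏ t, Q (x t) (y t)`. -/
def kronPow {n : ℕ} (Q : Matrix (Fin n) (Fin n) ℝ) (k : ℕ) :
    Matrix (Fin k → Fin n) (Fin k → Fin n) ℝ :=
  Matrix.of fun x y => ∏ t, Q (x t) (y t)

noncomputable section AuxPsd

lemma trace_mul_conjTranspose_self' {t s : ℕ} (M : Matrix (Fin t) (Fin s) ℂ) :
    (M * Mᴴ).trace = ((∑ q, ∑ p, Complex.normSq (M q p) : ℝ) : ℂ) := by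
  push_cast
  simp only [Matrix.trace, Matrix.diag, Matrix.mul_apply, Matrix.conjTranspose_apply]
  apply Finset.sum_congr rfl; intro q _
  apply Finset.sum_congr rfl; intro p _
  rw [Complex.normSq_eq_conj_mul_self]
  exact mul_comm _ _

lemma trace_gram {s t m : ℕ} (A : Matrix (Fin s) (Fin m) ℂ) (B : Matrix (Fin t) (Fin m) ℂ) :
    ((Aᴴ * A) * (Bᴴ * B)).trace = ((∑ q, ∑ p, Complex.normSq ((B * Aᴴ) q p) : ℝ) : ℂ) := by
  rw [show (Aᴴ * A) * (Bᴴ * B) = Aᴴ * (A * Bᴴ) * B by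
        rw [Matrix.mul_assoc, Matrix.mul_assoc, Matrix.mul_assoc],
    Matrix.trace_mul_cycle, ← Matrix.mul_assoc, Matrix.mul_assoc (B * Aᴴ),
    show (B * Aᴴ) * (A * Bᴴ) = (B * Aᴴ) * (B * Aᴴ)ᴴ by
        rw [Matrix.conjTranspose_mul, Matrix.conjTranspose_conjTranspose],
    trace_mul_conjTranspose_self']

/-- Gram-vector reformulation of PSD factorizations. -/
def GramFac {α β : Type} [Fintype α] [Fintype β] (P : Matrix α β ℝ) (m : ℕ) : Prop :=
  ∃ (s t : ℕ) (A : α → Matrix (Fin s) (Fin m) ℂ) (B : β → Matrix (Fin t) (Fin m) ℂ),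
    ∀ u v, P u v = ∑ q, ∑ p, Complex.normSq ((B v * (A u)ᴴ) q p)

lemma hasPsdFac_of_gramFac {α β : Type} [Fintype α] [Fintype β] {P : Matrix α β ℝ} {m : ℕ}
    (h : GramFac P m) : HasPsdFac P m := by
  obtain ⟨s, t, A, B, hfac⟩ := h
  refine ⟨fun u => (A u)ᴴ * A u, fun v => (B v)ᴴ * B v,
    fun u => Matrix.posSemidef_conjTranspose_mul_self _,
    fun v => Matrix.posSemidef_conjTranspose_mul_self _, fun u v => ?_⟩
  rw [trace_gram, hfac]

lemma gramFac_of_hasPsdFac {α β : Type} [Fintype α] [Fintype β] {P : Matrix α β ℝ} {m : ℕ}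
    (h : HasPsdFac P m) : GramFac P m := by
  obtain ⟨C, D, hC, hD, hfac⟩ := h
  choose A hA using fun u => (by open scoped MatrixOrder in exact CStarAlgebra.nonneg_iff_eq_star_mul_self.mp (hC u).nonneg : ∃ B : Matrix (Fin m) (Fin m) ℂ, C u = Bᴴ * B)
  choose B hB using fun v => (by open scoped MatrixOrder in exact CStarAlgebra.nonneg_iff_eq_star_mul_self.mp (hD v).nonneg : ∃ B : Matrix (Fin m) (Fin m) ℂ, D v = Bᴴ * B)
  simp only [Matrix.star_eq_conjTranspose] at hA hB
  refine ⟨m, m, A, B, fun u v => ?_⟩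
  have := hfac u v
  rw [hA, hB, trace_gram] at this
  exact_mod_cast this

lemma gramFac_of_nonneg {α β : Type} [Fintype α] [Fintype β] {P : Matrix α β ℝ}
    (h : ∀ i j, 0 ≤ P i j) : GramFac P (Fintype.card α) := by
  classical
  let e := Fintype.equivFin α
  refine ⟨1, 1, fun u => fun _ s => if s = e u then 1 else 0,
    fun v => fun _ s => (Real.sqrt (P (e.symm s) v) : ℂ), fun u v => ?_⟩
  rw [Fin.sum_univ_one, Fin.sum_univ_one]
  simp only [Matrix.mul_apply, Matrix.conjTranspose_apply]
  show P u v = Complex.normSq (∑ s, (Real.sqrt (P (e.symm s) v) : ℂ) *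
      star (if s = e u then (1:ℂ) else 0))
  have hsum : (∑ s, (Real.sqrt (P (e.symm s) v) : ℂ) * star (if s = e u then (1:ℂ) else 0))
      = (Real.sqrt (P u v) : ℂ) := by
    rw [Finset.sum_eq_single (e u)]
    · simp
    · intro b _ hb; simp [hb]
    · intro hb; simp at hb
  rw [hsum, Complex.normSq_ofReal, Real.mul_self_sqrt (h u v)]

def toE {m : ℕ} (x : Fin m → ℂ) : EuclideanSpace ℂ (Fin m) := (WithLp.equiv 2 _).symm x

def basisMat {m : ℕ} (V : Submodule ℂ (EuclideanSpace ℂ (Fin m))) :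
    Matrix (Fin (Module.finrank ℂ V)) (Fin m) ℂ :=
  fun q s => ((stdOrthonormalBasis ℂ V) q : EuclideanSpace ℂ (Fin m)) s

lemma mul_basisMat_conjT_mul {m : ℕ} (V : Submodule ℂ (EuclideanSpace ℂ (Fin m))) {s : ℕ}
    (M : Matrix (Fin s) (Fin m) ℂ) (hM : ∀ p, toE (M p) ∈ V) :
    M * (basisMat V)ᴴ * basisMat V = M := by
  classical
  set b := stdOrthonormalBasis ℂ V with hb
  ext p j
  set c : Fin (Module.finrank ℂ V) → ℂ :=
    fun q => (inner ℂ ((b q : EuclideanSpace ℂ (Fin m))) (toE (M p)) : ℂ) with hc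
  have hexp : ∑ q, (c q) • ((b q : EuclideanSpace ℂ (Fin m))) = toE (M p) := by
    have h1 := b.sum_repr' ⟨toE (M p), hM p⟩
    have h2 := congrArg (Submodule.subtype V) h1
    simpa [map_sum, hc, Submodule.coe_inner] using h2
  set L := WithLp.linearEquiv 2 ℂ (Fin m → ℂ) with hL
  have hexp2 : ∑ q, (c q) • (L ((b q : EuclideanSpace ℂ (Fin m)))) = M p := by
    have := congrArg L hexp
    rw [map_sum] at this
    simp only [_root_.map_smul] at this
    exact this
  have hexp' := congrArg (fun z : Fin m → ℂ => z j) hexp2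
  simp only [Finset.sum_apply, Pi.smul_apply, smul_eq_mul] at hexp'
  have lhs : (M * (basisMat V)ᴴ * basisMat V) p j
      = ∑ q, (∑ i, M p i * (starRingEnd ℂ) (basisMat V q i)) * basisMat V q j := by
    simp [Matrix.mul_apply, Matrix.conjTranspose_apply, Finset.sum_mul]
  rw [lhs]
  rw [← hexp']
  apply Finset.sum_congr rfl
  intro q _
  have hin : c q = ∑ i, (starRingEnd ℂ) (basisMat V q i) * M p i := by
    simp only [hc, PiLp.inner_apply, RCLike.inner_apply']
    rfl
  have hbj : L ((b q : EuclideanSpace ℂ (Fin m))) j = basisMat V q j := rfl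
  rw [hin, hbj]
  simp only [Finset.sum_mul]
  apply Finset.sum_congr rfl; intro i _; ring

lemma sum_normSq_smul_compress {s t m m' : ℕ} (A : Matrix (Fin s) (Fin m) ℂ)
    (B : Matrix (Fin t) (Fin m) ℂ) (U : Matrix (Fin m') (Fin m) ℂ) (c : ℝ) (hc : 0 ≤ c)
    (h : B * Uᴴ * U * Aᴴ = B * Aᴴ) :
    ∑ q, ∑ p, Complex.normSq (((((Real.sqrt c : ℝ) : ℂ) • (B * Uᴴ)) * (A * Uᴴ)ᴴ) q p)
      = c * ∑ q, ∑ p, Complex.normSq ((B * Aᴴ) q p) := by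
  have hmat : (((Real.sqrt c : ℝ) : ℂ) • (B * Uᴴ)) * (A * Uᴴ)ᴴ
      = ((Real.sqrt c : ℝ) : ℂ) • (B * Aᴴ) := by
    rw [Matrix.smul_mul, Matrix.conjTranspose_mul, Matrix.conjTranspose_conjTranspose,
      ← Matrix.mul_assoc, h]
  rw [hmat]
  rw [Finset.mul_sum]
  apply Finset.sum_congr rfl; intro q _
  rw [Finset.mul_sum]
  apply Finset.sum_congr rfl; intro p _
  rw [Matrix.smul_apply, smul_eq_mul, Complex.normSq_mul, Complex.normSq_ofReal,
    Real.mul_self_sqrt hc]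

lemma kron_cons {n k : ℕ} (Q : Matrix (Fin n) (Fin n) ℝ) (i j : Fin n)
    (x y : Fin k → Fin n) :
    kronPow Q (k + 1) (Fin.cons i x) (Fin.cons j y) = Q i j * kronPow Q k x y := by
  simp [kronPow, Fin.prod_univ_succ]

lemma pow_aux : ∀ r : ℕ, 6 ≤ r → (r + 2) ^ 2 ≤ 4 * 2 ^ r := by
  intro r hr
  induction r, hr using Nat.le_induction with
  | base => norm_num
  | succ r hr ih =>
    have h1 : (r + 1 + 2) ^ 2 ≤ 2 * (r + 2) ^ 2 := by nlinarith
    calc (r + 1 + 2) ^ 2 ≤ 2 * (r + 2) ^ 2 := h1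
      _ ≤ 2 * (4 * 2 ^ r) := by omega
      _ = 4 * 2 ^ (r + 1) := by ring

lemma arith_contra {n r : ℕ} (hn : 64 ≤ n) (hr : 2 ^ r < n)
    (h : 2 * Real.sqrt n - 2 ≤ (r : ℝ)) : False := by
  have hnat : (r + 2) ^ 2 < 4 * n := by
    rcases le_or_gt r 5 with h5 | h6
    · have : (r + 2) ^ 2 ≤ 49 := by nlinarith
      omega
    · have := pow_aux r h6
      omega
  have hs : Real.sqrt n * Real.sqrt n = (n : ℝ) := Real.mul_self_sqrt (by positivity)
  have hcast : ((r : ℝ) + 2) ^ 2 < 4 * (n : ℝ) := by exact_mod_cast hnat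
  nlinarith [Real.sqrt_nonneg (n : ℝ)]

lemma rank1_of_gram {γ δ : Type} [Fintype γ] [Fintype δ] {P : Matrix γ δ ℝ} {m : ℕ}
    (hm : m ≤ 1) (h : GramFac P m) :
    ∃ (u : γ → ℝ) (v : δ → ℝ), (∀ i, 0 ≤ u i) ∧ (∀ j, 0 ≤ v j) ∧ ∀ i j, P i j = u i * v j := by
  obtain ⟨s, t, A, B, hfac⟩ := h
  interval_cases m
  · refine ⟨0, 0, fun _ => le_refl _, fun _ => le_refl _, fun i j => ?_⟩
    rw [hfac]
    simp [Matrix.mul_apply]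
  · refine ⟨fun i => ∑ p, Complex.normSq (A i p 0), fun j => ∑ q, Complex.normSq (B j q 0),
      fun i => Finset.sum_nonneg fun p _ => Complex.normSq_nonneg _,
      fun j => Finset.sum_nonneg fun q _ => Complex.normSq_nonneg _, fun i j => ?_⟩
    rw [hfac]
    rw [Finset.sum_mul_sum, Finset.sum_comm]
    apply Finset.sum_congr rfl; intro p _
    apply Finset.sum_congr rfl; intro q _
    rw [show (B j * (A i)ᴴ) q p = B j q 0 * (starRingEnd ℂ) (A i p 0) by
      simp [Matrix.mul_apply, Matrix.conjTranspose_apply, Fin.sum_univ_one]]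
    rw [Complex.normSq_mul, Complex.normSq_conj]
    ring

lemma key {n : ℕ} (hn : 64 ≤ n) (Q : Matrix (Fin n) (Fin n) ℝ)
    (hdiag : ∀ i, Q i i = 0) (hoff : ∀ i j, i ≠ j → 0 < Q i j)
    (hnnr : 2 * Real.sqrt n - 2 ≤ (nnRank Q : ℝ)) :
    ∀ k, 1 ≤ k → ∀ r : ℕ, 2 ^ r < n →
      ∀ P : Fin r → Matrix (Fin k → Fin n) (Fin k → Fin n) ℝ,
        (∀ l x y, 0 ≤ P l x y) →
        (∀ l, ∃ m, m ≤ 2 ^ (k - 1) ∧ GramFac (P l) m) →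
        kronPow Q k = ∑ l, P l → False := by
  intro k hk1
  induction k, hk1 using Nat.le_induction with
  | base =>
    intro r hr P hPnn hfacs hsum
    choose m hm hg using hfacs
    choose u v hu hv huv using fun l => rank1_of_gram (by simpa using hm l) (hg l)
    have hmem : nnRank Q ≤ r := by
      apply Nat.sInf_le
      refine ⟨fun l i => u l (fun _ => i), fun l j => v l (fun _ => j),
        fun l i => hu l _, fun l j => hv l _, fun i j => ?_⟩
      have h1 : Q i j = kronPow Q 1 (fun _ => i) (fun _ => j) := by
        simp [kronPow, Fin.prod_univ_succ]
      rw [h1, hsum, Matrix.sum_apply]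
      exact Finset.sum_congr rfl fun l _ => huv l _ _
    exact arith_contra hn hr (le_trans hnnr (by exact_mod_cast Nat.cast_le.mpr hmem))
  | succ k hk IH =>
    intro r hr P hPnn hfacs hsum
    choose m hm s t A B hfac using hfacs
    simp only [Nat.add_sub_cancel] at hm
    classical
    set Vs : (i : Fin n) → (l : Fin r) → Submodule ℂ (EuclideanSpace ℂ (Fin (m l))) :=
      fun i l => Submodule.span ℂ (Set.range fun z : ((Fin k → Fin n) × Fin (s l)) =>
        toE ((A l (Fin.cons i z.1)) z.2)) with hVs
    set Ws : (i : Fin n) → (l : Fin r) → Submodule ℂ (EuclideanSpace ℂ (Fin (m l))) :=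
      fun i l => Submodule.span ℂ (Set.range fun z : ((Fin k → Fin n) × Fin (t l)) =>
        toE ((B l (Fin.cons i z.1)) z.2)) with hWs
    have hPzero : ∀ (i : Fin n) l x y, P l (Fin.cons i x) (Fin.cons i y) = 0 := by
      intro i l x y
      have h0 : ∑ l', P l' (Fin.cons i x) (Fin.cons i y) = 0 := by
        rw [← Matrix.sum_apply, ← hsum, kron_cons, hdiag, zero_mul]
      exact (Finset.sum_eq_zero_iff_of_nonneg (fun l' _ => hPnn l' _ _)).mp h0 l
        (Finset.mem_univ l)
    have hG0 : ∀ (i : Fin n) l x y, B l (Fin.cons i y) * (A l (Fin.cons i x))ᴴ = 0 := by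
      intro i l x y
      have h0 := hfac l (Fin.cons i x) (Fin.cons i y)
      rw [hPzero i l x y] at h0
      have h1 := (Finset.sum_eq_zero_iff_of_nonneg
        (fun q _ => Finset.sum_nonneg fun p _ => Complex.normSq_nonneg _)).mp h0.symm
      ext q p
      have h2 := (Finset.sum_eq_zero_iff_of_nonneg
        (fun p _ => Complex.normSq_nonneg _)).mp (h1 q (Finset.mem_univ q)) p (Finset.mem_univ p)
      simpa using Complex.normSq_eq_zero.mp h2
    have horth : ∀ (i : Fin n) l, Ws i l ≤ (Vs i l)ᗮ := by
      intro i l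
      apply Submodule.isOrtho_iff_le.mp
      apply Submodule.IsOrtho.symm
      rw [hVs, hWs]
      apply Submodule.isOrtho_span.mpr
      rintro u ⟨z, rfl⟩ w ⟨z', rfl⟩
      have h2 := congrFun (congrFun (hG0 i l z.1 z'.1) z'.2) z.2
      simp only [Matrix.mul_apply, Matrix.conjTranspose_apply, Matrix.zero_apply] at h2
      simp only [PiLp.inner_apply, RCLike.inner_apply']
      rw [← h2]
      apply Finset.sum_congr rfl; intro i' _
      change (starRingEnd ℂ) (A l (Fin.cons i z.1) z.2 i') * B l (Fin.cons i z'.1) z'.2 i'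
        = B l (Fin.cons i z'.1) z'.2 i' * (starRingEnd ℂ) (A l (Fin.cons i z.1) z.2 i')
      ring
    have hdim : ∀ (i : Fin n) l,
        Module.finrank ℂ (Vs i l) + Module.finrank ℂ (Ws i l) ≤ m l := by
      intro i l
      have h1 := Submodule.finrank_add_finrank_orthogonal (K := Vs i l)
      have h2 : Module.finrank ℂ (Ws i l) ≤ Module.finrank ℂ ((Vs i l)ᗮ) :=
        Submodule.finrank_mono (horth i l)
      have h3 : Module.finrank ℂ (EuclideanSpace ℂ (Fin (m l))) = m l :=
        finrank_euclideanSpace_fin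
      omega
    set σ : Fin n → (Fin r → Bool) :=
      fun i l => decide (Module.finrank ℂ (Vs i l) ≤ 2 ^ (k - 1)) with hσdef
    have hcard : Fintype.card (Fin r → Bool) < Fintype.card (Fin n) := by
      simpa [Fintype.card_fun] using hr
    obtain ⟨i, j, hij, hσ⟩ := Fintype.exists_ne_map_eq_of_card_lt σ hcard
    have hq := hoff i j hij
    set P' : Fin r → Matrix (Fin k → Fin n) (Fin k → Fin n) ℝ :=
      fun l => Matrix.of fun x y => P l (Fin.cons i x) (Fin.cons j y) / Q i j with hP'
    have hsum' : kronPow Q k = ∑ l, P' l := by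
      ext x y
      rw [Matrix.sum_apply]
      simp only [hP', Matrix.of_apply]
      rw [← Finset.sum_div,
        show ∑ l, P l (Fin.cons i x) (Fin.cons j y)
          = kronPow Q (k+1) (Fin.cons i x) (Fin.cons j y) from by rw [hsum, Matrix.sum_apply],
        kron_cons]
      field_simp
    have hfacs' : ∀ l, ∃ m', m' ≤ 2 ^ (k - 1) ∧ GramFac (P' l) m' := by
      intro l
      have hqinv : (0:ℝ) ≤ 1 / Q i j := by positivity
      by_cases hcase : Module.finrank ℂ (Vs i l) ≤ 2 ^ (k - 1)
      · refine ⟨Module.finrank ℂ (Vs i l), hcase, s l, t l,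
          fun x => A l (Fin.cons i x) * (basisMat (Vs i l))ᴴ,
          fun y => ((Real.sqrt (1 / Q i j) : ℝ) : ℂ) •
            (B l (Fin.cons j y) * (basisMat (Vs i l))ᴴ),
          fun x y => ?_⟩
        have hA : A l (Fin.cons i x) * (basisMat (Vs i l))ᴴ * basisMat (Vs i l)
            = A l (Fin.cons i x) :=
          mul_basisMat_conjT_mul _ _ (fun p => Submodule.subset_span ⟨(x, p), rfl⟩)
        have hAT : (basisMat (Vs i l))ᴴ * (basisMat (Vs i l) * (A l (Fin.cons i x))ᴴ)
            = (A l (Fin.cons i x))ᴴ := by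
          have := congrArg Matrix.conjTranspose hA
          rw [Matrix.conjTranspose_mul, Matrix.conjTranspose_mul,
            Matrix.conjTranspose_conjTranspose] at this
          exact this
        have hcomp : B l (Fin.cons j y) * (basisMat (Vs i l))ᴴ * basisMat (Vs i l)
            * (A l (Fin.cons i x))ᴴ = B l (Fin.cons j y) * (A l (Fin.cons i x))ᴴ := by
          rw [Matrix.mul_assoc (B l (Fin.cons j y) * (basisMat (Vs i l))ᴴ),
            Matrix.mul_assoc (B l (Fin.cons j y)), hAT]
        have hval : P' l x y = (1 / Q i j) * P l (Fin.cons i x) (Fin.cons j y) := by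
          simp only [hP', Matrix.of_apply]
          rw [div_eq_mul_inv, mul_comm, one_div]
        rw [hval, hfac l]
        exact (sum_normSq_smul_compress _ _ _ _ hqinv hcomp).symm
      · have hcasej : ¬ (Module.finrank ℂ (Vs j l) ≤ 2 ^ (k - 1)) := by
          have hiff := decide_eq_decide.mp (congrFun hσ l)
          exact fun h => hcase (hiff.mpr h)
        have hWdim : Module.finrank ℂ (Ws j l) ≤ 2 ^ (k - 1) := by
          have h1 := hdim j l
          have h2 := hm l
          have h3 : 2 ^ k = 2 ^ (k - 1) + 2 ^ (k - 1) := by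
            conv_lhs => rw [← Nat.sub_add_cancel hk]
            rw [pow_succ]
            ring
          omega
        refine ⟨Module.finrank ℂ (Ws j l), hWdim, s l, t l,
          fun x => A l (Fin.cons i x) * (basisMat (Ws j l))ᴴ,
          fun y => ((Real.sqrt (1 / Q i j) : ℝ) : ℂ) •
            (B l (Fin.cons j y) * (basisMat (Ws j l))ᴴ),
          fun x y => ?_⟩
        have hB : B l (Fin.cons j y) * (basisMat (Ws j l))ᴴ * basisMat (Ws j l)
            = B l (Fin.cons j y) :=
          mul_basisMat_conjT_mul _ _ (fun q => Submodule.subset_span ⟨(y, q), rfl⟩)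
        have hcomp : B l (Fin.cons j y) * (basisMat (Ws j l))ᴴ * basisMat (Ws j l)
            * (A l (Fin.cons i x))ᴴ = B l (Fin.cons j y) * (A l (Fin.cons i x))ᴴ := by
          rw [hB]
        have hval : P' l x y = (1 / Q i j) * P l (Fin.cons i x) (Fin.cons j y) := by
          simp only [hP', Matrix.of_apply]
          rw [div_eq_mul_inv, mul_comm, one_div]
        rw [hval, hfac l]
        exact (sum_normSq_smul_compress _ _ _ _ hqinv hcomp).symm
    exact IH r hr P' (fun l x y => div_nonneg (hPnn l _ _) hq.le) hfacs' hsum'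

end AuxPsd

theorem stmt8 {n : ℕ} (hn : 64 ≤ n)
    (Q : Matrix (Fin n) (Fin n) ℝ)
    (hdiag : ∀ i, Q i i = 0) (hoff : ∀ i j, i ≠ j → 0 < Q i j)
    (hnnr : 2 * Real.sqrt n - 2 ≤ (nnRank Q : ℝ))
    (k : ℕ) (hk : 2 ≤ k)
    (r : ℕ) (P : Fin r → Matrix (Fin k → Fin n) (Fin k → Fin n) ℝ)
    (hPnn : ∀ l x y, 0 ≤ P l x y) (hPrank : ∀ l, prank (P l) ≤ 2 ^ (k - 1))
    (hsum : kronPow Q k = ∑ l, P l) :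
    Real.logb 2 n ≤ (r : ℝ) := by
  by_contra hcon
  push_neg at hcon
  have hn0 : (0:ℝ) < n := by
    have : (64:ℝ) ≤ n := by exact_mod_cast hn
    linarith
  have h2 : ((2:ℝ)) ^ (r:ℝ) < n := (Real.lt_logb_iff_rpow_lt (by norm_num) hn0).mp hcon
  have hrn : 2 ^ r < n := by
    have heq : ((2:ℝ)) ^ (r:ℝ) = ((2^r : ℕ) : ℝ) := by
      rw [Real.rpow_natCast]; push_cast; ring
    rw [heq] at h2; exact_mod_cast h2
  refine key hn Q hdiag hoff hnnr k (by omega) r hrn P hPnn (fun l => ?_) hsum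
  refine ⟨prank (P l), hPrank l, gramFac_of_hasPsdFac ?_⟩
  have hne : {rr | HasPsdFac (P l) rr}.Nonempty :=
    ⟨Fintype.card (Fin k → Fin n), hasPsdFac_of_gramFac (gramFac_of_nonneg (hPnn l))⟩
  exact Nat.sInf_mem hne
end

section
/- Let P ∈ ℝ_{≥0}^{n×m} be a nonnegative matrix, let c = ⌈log₂ prank(P)⌉, and suppose P = Σ_{i=1}^{2^c} P_i, where each P_i ∈ ℝ_{≥0}^{n×m} is nonnegative with PSD-rank prank(P_i) ≤ 2^t for a nonnegative integer t. Then t ≥ (⌈log₂ rank(P)⌉ − ⌈log₂ prank(P)⌉) / 2. -/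
open Matrix BigOperators Kronecker
open scoped ComplexOrder

/-- Every nonnegative matrix has a PSD factorization of size the number of columns. -/
lemma hasPsdFac_of_nonneg {n m : ℕ} (P : Matrix (Fin n) (Fin m) ℝ)
    (hP : ∀ i j, 0 ≤ P i j) : HasPsdFac P m := by
  refine ⟨fun i => Matrix.diagonal (fun a => (P i a : ℂ)),
    fun j => Matrix.diagonal (fun a => if a = j then 1 else 0), ?_, ?_, ?_⟩
  · intro i
    refine Matrix.posSemidef_diagonal_iff.mpr fun a => ?_
    exact_mod_cast hP i a
  · intro j
    refine Matrix.posSemidef_diagonal_iff.mpr fun a => ?_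
    split <;> norm_num
  · intro i j
    rw [Matrix.diagonal_mul_diagonal, Matrix.trace_diagonal]
    simp [Finset.sum_ite_eq', mul_ite]

/-- Antisymmetric double sums vanish. -/
lemma sum_antisymm_zero {r : ℕ} (f : Fin r → Fin r → ℝ)
    (hf : ∀ a b, f b a = - f a b) : ∑ a, ∑ b, f a b = 0 := by
  have h1 : ∑ a, ∑ b, f a b = ∑ b, ∑ a, f a b := Finset.sum_comm
  have h2 : ∑ b, ∑ a, f a b = - ∑ a, ∑ b, f a b := by
    rw [← Finset.sum_neg_distrib]
    refine Finset.sum_congr rfl fun a _ => ?_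
    rw [← Finset.sum_neg_distrib]
    exact Finset.sum_congr rfl fun b _ => by rw [hf]
  linarith [h1, h2]

/-- A PSD factorization of size `r` yields rank at most `r²`. -/
lemma rank_le_of_hasPsdFac {n m r : ℕ} (P : Matrix (Fin n) (Fin m) ℝ)
    (h : HasPsdFac P r) : P.rank ≤ r * r := by
  obtain ⟨C, D, hC, hD, hfac⟩ := h
  set A : Matrix (Fin n) (Fin r × Fin r) ℝ :=
    fun i p => (C i p.1 p.2).re + (C i p.1 p.2).im with hA
  set B : Matrix (Fin r × Fin r) (Fin m) ℝ :=
    fun p j => (D j p.1 p.2).re + (D j p.1 p.2).im with hB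
  have hPAB : P = A * B := by
    ext i j
    have h1 : P i j = ((C i * D j).trace).re := by
      rw [← hfac i j, Complex.ofReal_re]
    have hDh : ∀ a b, (D j) b a = star ((D j) a b) := by
      intro a b; rw [(hD j).isHermitian.apply]
    have hCh : ∀ a b, (C i) b a = star ((C i) a b) := by
      intro a b; rw [(hC i).isHermitian.apply]
    have htr : ((C i * D j).trace).re =
        ∑ a, ∑ b, ((C i a b).re * (D j a b).re + (C i a b).im * (D j a b).im) := by
      rw [Matrix.trace, Complex.re_sum]
      refine Finset.sum_congr rfl fun a _ => ?_
      rw [Matrix.diag_apply, Matrix.mul_apply, Complex.re_sum]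
      refine Finset.sum_congr rfl fun b _ => ?_
      rw [hDh b a]
      simp [Complex.mul_re, mul_comm]
      ring
    have hcross : ∑ a, ∑ b,
        ((C i a b).re * (D j a b).im + (C i a b).im * (D j a b).re) = 0 := by
      refine sum_antisymm_zero _ fun a b => ?_
      have hc := hCh a b
      have hd := hDh a b
      have hc1 : (C i b a).re = (C i a b).re := by rw [hc]; simp
      have hc2 : (C i b a).im = -(C i a b).im := by rw [hc]; simp
      have hd1 : (D j b a).re = (D j a b).re := by rw [hd]; simp
      have hd2 : (D j b a).im = -(D j a b).im := by rw [hd]; simp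
      rw [hc1, hc2, hd1, hd2]; ring
    rw [h1, htr, Matrix.mul_apply]
    have hprod : ∑ p : Fin r × Fin r, A i p * B p j
        = ∑ a, ∑ b, A i (a, b) * B (a, b) j := by
      rw [← Finset.univ_product_univ, Finset.sum_product]
    rw [hprod]
    calc ∑ a, ∑ b, ((C i a b).re * (D j a b).re + (C i a b).im * (D j a b).im)
        = (∑ a, ∑ b, ((C i a b).re * (D j a b).re + (C i a b).im * (D j a b).im))
          + ∑ a, ∑ b, ((C i a b).re * (D j a b).im + (C i a b).im * (D j a b).re) := by
          rw [hcross, add_zero]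
      _ = ∑ a, ∑ b, (((C i a b).re + (C i a b).im) * ((D j a b).re + (D j a b).im)) := by
          rw [← Finset.sum_add_distrib]
          refine Finset.sum_congr rfl fun a _ => ?_
          rw [← Finset.sum_add_distrib]
          exact Finset.sum_congr rfl fun b _ => by ring
      _ = ∑ a, ∑ b, A i (a, b) * B (a, b) j := by
          simp only [hA, hB]
  rw [hPAB]
  refine (Matrix.rank_mul_le_right A B).trans ?_
  refine (Matrix.rank_le_card_height B).trans ?_
  simp [Fintype.card_prod]

/-- Rank is subadditive. -/
lemma matrix_rank_add_le {n m : ℕ} (A B : Matrix (Fin n) (Fin m) ℝ) :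
    (A + B).rank ≤ A.rank + B.rank := by
  rw [Matrix.rank, Matrix.rank, Matrix.rank, Matrix.mulVecLin_add]
  have h : LinearMap.range (A.mulVecLin + B.mulVecLin)
      ≤ LinearMap.range A.mulVecLin ⊔ LinearMap.range B.mulVecLin := by
    rintro x ⟨v, rfl⟩
    exact Submodule.mem_sup.2 ⟨A.mulVecLin v, ⟨v, rfl⟩, B.mulVecLin v, ⟨v, rfl⟩, rfl⟩
  exact (Submodule.finrank_mono h).trans
    (Submodule.finrank_add_le_finrank_add_finrank _ _)

lemma matrix_rank_sum_le {n m : ℕ} {ι : Type*} (s : Finset ι)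
    (f : ι → Matrix (Fin n) (Fin m) ℝ) :
    (∑ i ∈ s, f i).rank ≤ ∑ i ∈ s, (f i).rank := by
  classical
  induction s using Finset.induction_on with
  | empty => simp [Matrix.rank_zero]
  | @insert a s h ih =>
    rw [Finset.sum_insert h, Finset.sum_insert h]
    exact (matrix_rank_add_le _ _).trans (by gcongr)

theorem stmt10 {n m : ℕ}
    (P : Matrix (Fin n) (Fin m) ℝ) (hP : ∀ i j, 0 ≤ P i j)
    (c : ℕ) (hc : c = Nat.clog 2 (prank P)) (t : ℕ)
    (Q : Fin (2 ^ c) → Matrix (Fin n) (Fin m) ℝ)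
    (hQnn : ∀ i x y, 0 ≤ Q i x y) (hQrank : ∀ i, prank (Q i) ≤ 2 ^ t)
    (hsum : P = ∑ i, Q i) :
    ((Nat.clog 2 P.rank : ℝ) - (Nat.clog 2 (prank P) : ℝ)) / 2 ≤ (t : ℝ) := by
  -- each Q i has rank at most 2^(2t)
  have hQr : ∀ i, (Q i).rank ≤ 2 ^ (2 * t) := by
    intro i
    have hne : {r | HasPsdFac (Q i) r}.Nonempty :=
      ⟨m, hasPsdFac_of_nonneg (Q i) (hQnn i)⟩
    have hmem : HasPsdFac (Q i) (prank (Q i)) := Nat.sInf_mem hne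
    have h1 := rank_le_of_hasPsdFac (Q i) hmem
    calc (Q i).rank ≤ prank (Q i) * prank (Q i) := h1
      _ ≤ 2 ^ t * 2 ^ t := Nat.mul_le_mul (hQrank i) (hQrank i)
      _ = 2 ^ (2 * t) := by rw [← pow_add]; ring_nf
  have hrank : P.rank ≤ 2 ^ (c + 2 * t) := by
    rw [hsum]
    refine (matrix_rank_sum_le Finset.univ Q).trans ?_
    calc ∑ i, (Q i).rank ≤ ∑ _i : Fin (2 ^ c), 2 ^ (2 * t) :=
          Finset.sum_le_sum fun i _ => hQr i
      _ = 2 ^ c * 2 ^ (2 * t) := by simp [Finset.sum_const, Nat.card_eq_fintype_card]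
      _ = 2 ^ (c + 2 * t) := by rw [← pow_add]
  have hclog : Nat.clog 2 P.rank ≤ c + 2 * t := by
    calc Nat.clog 2 P.rank ≤ Nat.clog 2 (2 ^ (c + 2 * t)) :=
          Nat.clog_mono_right 2 hrank
      _ = c + 2 * t := Nat.clog_pow 2 _ one_lt_two
  have hclogR : (Nat.clog 2 P.rank : ℝ) ≤ (c : ℝ) + 2 * t := by
    exact_mod_cast hclog
  rw [← hc]
  linarith
end

section
/- Let A ∈ ℝ_{≥0}^{n₁×m₁} and B ∈ ℝ_{≥0}^{n₂×m₂} be nonnegative matrices and let C ∈ ℝ_{≥0}^{n₁×m₂} be any nonnegative matrix. Then the block matrix M = [[A, C],[0, B]] (with the zero block of size n₂×m₁) satisfies prank(M) ≥ prank(A) + prank(B). In particular, if prank(A) = prank(B) = 2 then prank(M) ≥ 4. -/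
open Matrix BigOperators Kronecker
open scoped ComplexOrder

section AuxLemmas

set_option maxHeartbeats 1000000

/-- If `tr (Aᴴ A) = 0` then `A = 0`. -/
lemma aux_trace_conjTranspose_mul_self_eq_zero {m n : Type} [Fintype m] [Fintype n]
    {A : Matrix m n ℂ} (h : (Aᴴ * A).trace = 0) : A = 0 := by
  classical
  have hnn : ∀ j, 0 ≤ (Aᴴ * A) j j := by
    intro j
    have := dotProduct_star_self_nonneg (fun i => A i j)
    simpa [Matrix.mul_apply, Matrix.conjTranspose_apply, dotProduct] using this
  have hzero : ∀ j ∈ Finset.univ, (Aᴴ * A) j j = 0 := by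
    rw [← Finset.sum_eq_zero_iff_of_nonneg (fun j _ => hnn j)]
    exact h
  ext i j
  have hj := hzero j (Finset.mem_univ j)
  have : dotProduct (star (fun i => A i j)) (fun i => A i j) = 0 := by
    simpa [Matrix.mul_apply, Matrix.conjTranspose_apply, dotProduct] using hj
  have := dotProduct_star_self_eq_zero.mp this
  simpa using congrFun this i

open scoped MatrixOrder in
/-- PSD matrices with `tr (E F) = 0` satisfy `E F = 0`. -/
lemma aux_psd_mul_eq_zero {n : Type} [Fintype n] [DecidableEq n] {E F : Matrix n n ℂ}
    (hE : E.PosSemidef) (hF : F.PosSemidef) (h : (E * F).trace = 0) : E * F = 0 := by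
  set S := CFC.sqrt E with hSdef
  set T := CFC.sqrt F with hTdef
  have hSh : Sᴴ = S := (CFC.sqrt_nonneg E).posSemidef.isHermitian
  have hTh : Tᴴ = T := (CFC.sqrt_nonneg F).posSemidef.isHermitian
  have hSE : S * S = E := CFC.sqrt_mul_sqrt_self E hE.nonneg
  have hTF : T * T = F := CFC.sqrt_mul_sqrt_self F hF.nonneg
  have key : ((T * S)ᴴ * (T * S)).trace = 0 := by
    have e1 : (T * S)ᴴ * (T * S) = S * (T * (T * S)) := by
      rw [Matrix.conjTranspose_mul, hSh, hTh]
      simp only [Matrix.mul_assoc]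
    rw [e1, Matrix.trace_mul_comm]
    have e2 : T * (T * S) * S = F * E := by
      rw [← hTF, ← hSE]
      simp only [Matrix.mul_assoc]
    rw [e2, Matrix.trace_mul_comm]
    exact h
  have hTS : T * S = 0 := aux_trace_conjTranspose_mul_self_eq_zero key
  have hST : S * T = 0 := by
    have := congrArg Matrix.conjTranspose hTS
    rw [Matrix.conjTranspose_mul, hSh, hTh] at this
    simpa using this
  calc E * F = S * (S * T) * T := by
        rw [← hSE, ← hTF]; simp only [Matrix.mul_assoc]
    _ = 0 := by rw [hST]; simp

/-- Any nonnegative matrix has a trivial diagonal PSD factorization. -/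
lemma aux_hasPsdFac_card {α β : Type} [Fintype α] [Fintype β] (P : Matrix α β ℝ)
    (hP : ∀ i j, 0 ≤ P i j) : HasPsdFac P (Fintype.card α) := by
  classical
  let e := Fintype.equivFin α
  refine ⟨fun i => Matrix.diagonal (fun k => if k = e i then 1 else 0),
          fun j => Matrix.diagonal (fun k => (P (e.symm k) j : ℂ)), ?_, ?_, ?_⟩
  · intro i
    rw [Matrix.posSemidef_diagonal_iff]
    intro k
    split <;> norm_num
  · intro j
    rw [Matrix.posSemidef_diagonal_iff]
    intro k
    exact Complex.zero_le_real.mpr (hP _ j)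
  · intro i j
    rw [Matrix.diagonal_mul_diagonal, Matrix.trace_diagonal]
    simp [ite_mul]

/-- Compress a PSD factorization onto a subspace containing the columns of all the `F j`. -/
lemma aux_compress {α β : Type} [Fintype α] [Fintype β] (P : Matrix α β ℝ) {r : ℕ}
    (E : α → Matrix (Fin r) (Fin r) ℂ) (F : β → Matrix (Fin r) (Fin r) ℂ)
    (hE : ∀ i, (E i).PosSemidef) (hF : ∀ j, (F j).PosSemidef)
    (htr : ∀ i j, (P i j : ℂ) = ((E i) * (F j)).trace)
    (V : Submodule ℂ (EuclideanSpace ℂ (Fin r)))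
    (hV : ∀ j k, WithLp.toLp 2 (fun x => F j x k) ∈ V) :
    HasPsdFac P (Module.finrank ℂ V) := by
  classical
  letI instN : NormedAddCommGroup V := Submodule.normedAddCommGroup V
  letI instI : InnerProductSpace ℂ V := Submodule.innerProductSpace V
  haveI instF : FiniteDimensional ℂ V := FiniteDimensional.finiteDimensional_submodule V
  set a := Module.finrank ℂ V with ha
  let b : OrthonormalBasis (Fin a) ℂ V := stdOrthonormalBasis ℂ V
  let U : Matrix (Fin r) (Fin a) ℂ := Matrix.of fun x l => (b l : EuclideanSpace ℂ (Fin r)) x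
  have hproj : ∀ v : V, U *ᵥ (Uᴴ *ᵥ (v : EuclideanSpace ℂ (Fin r))) =
      (v : EuclideanSpace ℂ (Fin r)) := by
    intro v
    funext x
    have hrep := b.sum_repr v
    let ev : EuclideanSpace ℂ (Fin r) →ₗ[ℂ] ℂ :=
      { toFun := fun w => w x, map_add' := fun _ _ => rfl, map_smul' := fun _ _ => rfl }
    have h1 : ∑ l, b.repr v l • ((b l : EuclideanSpace ℂ (Fin r)))
        = (v : EuclideanSpace ℂ (Fin r)) := by
      have := congrArg V.subtype hrep
      rw [map_sum] at this
      simpa using this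
    have h2 := congrArg ev h1
    rw [map_sum] at h2
    have hcoe2 : ∑ l, b.repr v l * ((b l : EuclideanSpace ℂ (Fin r)) x)
        = (v : EuclideanSpace ℂ (Fin r)) x := by
      refine Eq.trans (Finset.sum_congr rfl fun l _ => ?_) h2
      exact (by rw [_root_.map_smul, smul_eq_mul]; rfl :
        ev (b.repr v l • ((b l : EuclideanSpace ℂ (Fin r))))
          = b.repr v l * (b l : EuclideanSpace ℂ (Fin r)) x).symm
    have hrepr : ∀ l, (Uᴴ *ᵥ (v : EuclideanSpace ℂ (Fin r))) l = b.repr v l := by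
      intro l
      have h1 : b.repr v l = inner (𝕜 := ℂ) (b l) v := b.repr_apply_apply v l
      rw [h1, Submodule.coe_inner, PiLp.inner_apply]
      simp only [RCLike.inner_apply]
      show ∑ x', Uᴴ l x' * (v : EuclideanSpace ℂ (Fin r)) x'
          = ∑ x', (v : EuclideanSpace ℂ (Fin r)) x'
              * starRingEnd ℂ ((b l : EuclideanSpace ℂ (Fin r)) x')
      exact Finset.sum_congr rfl fun x' _ => mul_comm _ _
    have hsum : (U *ᵥ (Uᴴ *ᵥ (v : EuclideanSpace ℂ (Fin r)))) x
        = ∑ l, b.repr v l * ((b l : EuclideanSpace ℂ (Fin r)) x) := by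
      show ∑ l, U x l * (Uᴴ *ᵥ (v : EuclideanSpace ℂ (Fin r))) l = _
      refine Finset.sum_congr rfl fun l _ => ?_
      rw [hrepr l, mul_comm]
      rfl
    rw [hsum, hcoe2]
  have hUUF : ∀ j, U * Uᴴ * F j = F j := by
    intro j
    ext x k
    have hv := hproj ⟨WithLp.toLp 2 (fun y => F j y k), hV j k⟩
    rw [Matrix.mulVec_mulVec] at hv
    have := congrFun hv x
    simpa [Matrix.mul_apply, Matrix.mulVec, dotProduct] using this
  have hP : (U * Uᴴ)ᴴ = U * Uᴴ := by
    rw [Matrix.conjTranspose_mul, Matrix.conjTranspose_conjTranspose]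
  have hFUU : ∀ j, F j * (U * Uᴴ) = F j := by
    intro j
    calc F j * (U * Uᴴ) = (F j)ᴴ * (U * Uᴴ)ᴴ := by rw [(hF j).isHermitian.eq, hP]
      _ = ((U * Uᴴ) * F j)ᴴ := (Matrix.conjTranspose_mul _ _).symm
      _ = (F j)ᴴ := by rw [hUUF j]
      _ = F j := (hF j).isHermitian.eq
  refine ⟨fun i => Uᴴ * E i * U, fun j => Uᴴ * F j * U,
    fun i => (hE i).conjTranspose_mul_mul_same U,
    fun j => (hF j).conjTranspose_mul_mul_same U, ?_⟩
  intro i j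
  rw [htr i j]
  have h1 : (Uᴴ * E i * U) * (Uᴴ * F j * U) = Uᴴ * (E i * U * Uᴴ * F j * U) := by
    simp only [Matrix.mul_assoc]
  rw [h1, Matrix.trace_mul_comm Uᴴ (E i * U * Uᴴ * F j * U)]
  have h2 : (E i * U * Uᴴ * F j * U) * Uᴴ = E i * F j := by
    have e1 : (E i * U * Uᴴ * F j * U) * Uᴴ = E i * (U * Uᴴ * F j) * (U * Uᴴ) := by
      simp only [Matrix.mul_assoc]
    rw [e1, hUUF j, Matrix.mul_assoc (E i) (F j) (U * Uᴴ), hFUU j]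
  rw [h2]

end AuxLemmas

set_option maxHeartbeats 1000000 in
theorem stmt11 {n₁ m₁ n₂ m₂ : ℕ}
    (A : Matrix (Fin n₁) (Fin m₁) ℝ) (hA : ∀ i j, 0 ≤ A i j)
    (B : Matrix (Fin n₂) (Fin m₂) ℝ) (hB : ∀ i j, 0 ≤ B i j)
    (C : Matrix (Fin n₁) (Fin m₂) ℝ) (hC : ∀ i j, 0 ≤ C i j) :
    prank A + prank B ≤ prank (Matrix.fromBlocks A C 0 B) ∧
      (prank A = 2 → prank B = 2 → 4 ≤ prank (Matrix.fromBlocks A C 0 B)) := by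
  classical
  have hMnn : ∀ i j, 0 ≤ Matrix.fromBlocks A C 0 B i j := by
    rintro (i | i) (j | j)
    · simpa using hA i j
    · simpa using hC i j
    · simp
    · simpa using hB i j
  have hnonempty : {n | HasPsdFac (Matrix.fromBlocks A C 0 B) n}.Nonempty :=
    ⟨_, aux_hasPsdFac_card _ hMnn⟩
  set r := prank (Matrix.fromBlocks A C 0 B) with hr
  have hmem : HasPsdFac (Matrix.fromBlocks A C 0 B) r := Nat.sInf_mem hnonempty
  obtain ⟨E, F, hE, hF, htr⟩ := hmem
  -- the bottom-left block is zero, so the corresponding products vanish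
  have hzero : ∀ i j, E (Sum.inr i) * F (Sum.inl j) = 0 := by
    intro i j
    refine aux_psd_mul_eq_zero (hE _) (hF _) ?_
    have := htr (Sum.inr i) (Sum.inl j)
    simp only [Matrix.fromBlocks_apply₂₁, Matrix.zero_apply, Complex.ofReal_zero] at this
    exact this.symm
  have hzero' : ∀ j i, F (Sum.inl j) * E (Sum.inr i) = 0 := by
    intro j i
    have h := congrArg Matrix.conjTranspose (hzero i j)
    rw [Matrix.conjTranspose_mul, (hF _).isHermitian.eq, (hE _).isHermitian.eq] at h
    simpa using h
  -- spans of the columns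
  let V : Submodule ℂ (EuclideanSpace ℂ (Fin r)) :=
    Submodule.span ℂ {v | ∃ j k, v = WithLp.toLp 2 (fun x => F (Sum.inl j) x k)}
  let W : Submodule ℂ (EuclideanSpace ℂ (Fin r)) :=
    Submodule.span ℂ {v | ∃ i k, v = WithLp.toLp 2 (fun x => E (Sum.inr i) x k)}
  have hVmem : ∀ j k, WithLp.toLp 2 (fun x => F (Sum.inl j) x k) ∈ V :=
    fun j k => Submodule.subset_span ⟨j, k, rfl⟩
  have hWmem : ∀ i k, WithLp.toLp 2 (fun x => E (Sum.inr i) x k) ∈ W :=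
    fun i k => Submodule.subset_span ⟨i, k, rfl⟩
  -- a PSD factorization of A of size dim V
  have hfacA : HasPsdFac A (Module.finrank ℂ V) := by
    refine aux_compress A (fun i => E (Sum.inl i)) (fun j => F (Sum.inl j))
      (fun i => hE _) (fun j => hF _) ?_ V hVmem
    intro i j
    have := htr (Sum.inl i) (Sum.inl j)
    simpa using this
  -- a PSD factorization of B of size dim W
  have hfacB : HasPsdFac B (Module.finrank ℂ W) := by
    have hfacBt : HasPsdFac Bᵀ (Module.finrank ℂ W) := by
      refine aux_compress Bᵀ (fun j => F (Sum.inr j)) (fun i => E (Sum.inr i))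
        (fun j => hF _) (fun i => hE _) ?_ W hWmem
      intro j i
      rw [Matrix.transpose_apply, Matrix.trace_mul_comm]
      have := htr (Sum.inr i) (Sum.inr j)
      simpa using this
    obtain ⟨Cb, Db, h1, h2, h3⟩ := hfacBt
    refine ⟨Db, Cb, h2, h1, fun i j => ?_⟩
    rw [Matrix.trace_mul_comm]
    exact h3 j i
  -- orthogonality of the generators
  have hcol : ∀ j k' i k,
      @inner ℂ (EuclideanSpace ℂ (Fin r)) _
        (WithLp.toLp 2 (fun x => F (Sum.inl j) x k')) (WithLp.toLp 2 (fun x => E (Sum.inr i) x k)) = 0 := by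
    intro j k' i k
    rw [PiLp.inner_apply]
    simp only [RCLike.inner_apply]
    have hterm : ∀ x, starRingEnd ℂ (F (Sum.inl j) x k') = F (Sum.inl j) k' x := by
      intro x
      conv_rhs => rw [← (hF (Sum.inl j)).isHermitian.eq]
      rfl
    calc ∑ x, E (Sum.inr i) x k * starRingEnd ℂ (F (Sum.inl j) x k')
        = ∑ x, F (Sum.inl j) k' x * E (Sum.inr i) x k :=
          Finset.sum_congr rfl fun x _ => by rw [hterm x, mul_comm]
      _ = (F (Sum.inl j) * E (Sum.inr i)) k' k := (Matrix.mul_apply).symm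
      _ = 0 := by rw [hzero' j i]; simp
  have horth : W ≤ Vᗮ := by
    refine Submodule.span_le.mpr ?_
    rintro w ⟨i, k, rfl⟩
    rw [SetLike.mem_coe, Submodule.mem_orthogonal]
    intro u hu
    refine Submodule.span_induction ?_ ?_ ?_ ?_ hu
    · rintro u' ⟨j, k', rfl⟩
      exact hcol j k' i k
    · exact inner_zero_left _
    · intro y z hy hz hy' hz'
      rw [inner_add_left, hy', hz', add_zero]
    · intro c y hy hy'
      rw [inner_smul_left, hy', mul_zero]
  have hdim : Module.finrank ℂ V + Module.finrank ℂ W ≤ r := by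
    have h1 : Module.finrank ℂ W ≤ Module.finrank ℂ Vᗮ := Submodule.finrank_mono horth
    have h2 : Module.finrank ℂ V + Module.finrank ℂ Vᗮ
        = Module.finrank ℂ (EuclideanSpace ℂ (Fin r)) :=
      Submodule.finrank_add_finrank_orthogonal V
    have h3 : Module.finrank ℂ (EuclideanSpace ℂ (Fin r)) = r := finrank_euclideanSpace_fin
    omega
  have main : prank A + prank B ≤ r :=
    le_trans (add_le_add (Nat.sInf_le hfacA) (Nat.sInf_le hfacB)) hdim
  exact ⟨main, fun h2 h2' => by rw [h2, h2'] at main; exact main⟩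
end

section
/- Let m ≥ 1 and let P ∈ ℝ_{≥0}^{n²×n²} be a nonnegative matrix with PSD-rank prank(P) ≤ 2m. View P as an n×n array of n×n blocks P^{(i,j)}, and assume every diagonal block P^{(i,i)} is the zero matrix. Define A = {i ∈ [n] : ∃ j, prank(P^{(i,j)}) > m} and B = {j ∈ [n] : ∃ i, prank(P^{(i,j)}) > m}. Then A ∩ B = ∅; equivalently, all blocks of PSD-rank greater than m lie in the combinatorial rectangle A×B, which contains no diagonal position. -/
open Matrix BigOperators Kronecker
open scoped ComplexOrder

open scoped InnerProductSpace

private lemma myTraceZero {p q : Type} [Fintype p] [Fintype q]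
    {M : Matrix p q ℂ} (h : (Mᴴ * M).trace = 0) : M = 0 := by
  have h1 : ∑ j, star (fun i => M i j) ⬝ᵥ (fun i => M i j) = 0 := by
    rw [← h]
    simp [Matrix.trace, Matrix.mul_apply, Matrix.diag, dotProduct, Matrix.conjTranspose_apply]
  have h2 := (Finset.sum_eq_zero_iff_of_nonneg
    (fun j _ => dotProduct_star_self_nonneg (fun i => M i j))).mp h1
  ext i j
  have h3 : (fun i => M i j) = 0 :=
    dotProduct_star_self_eq_zero.mp (h2 j (Finset.mem_univ j))
  exact congrFun h3 i

private lemma myPsdMulZero {r : Type} [Fintype r] [DecidableEq r] {G H : Matrix r r ℂ}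
    (hG : G.PosSemidef) (hH : H.PosSemidef) (h : (G * H).trace = 0) : G * H = 0 := by
  obtain ⟨E, rfl⟩ : ∃ E : Matrix r r ℂ, G = Eᴴ * E := by
    open scoped MatrixOrder in exact CStarAlgebra.nonneg_iff_eq_star_mul_self.mp hG.nonneg
  obtain ⟨F, rfl⟩ : ∃ F : Matrix r r ℂ, H = Fᴴ * F := by
    open scoped MatrixOrder in exact CStarAlgebra.nonneg_iff_eq_star_mul_self.mp hH.nonneg
  have key : ((E * Fᴴ)ᴴ * (E * Fᴴ)).trace = 0 := by
    rw [conjTranspose_mul, conjTranspose_conjTranspose]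
    have e1 : (F * Eᴴ) * (E * Fᴴ) = F * (Eᴴ * (E * Fᴴ)) := by simp only [Matrix.mul_assoc]
    rw [e1, trace_mul_comm]
    simpa only [Matrix.mul_assoc] using h
  have hM : E * Fᴴ = 0 := myTraceZero key
  calc Eᴴ * E * (Fᴴ * F) = Eᴴ * (E * Fᴴ) * F := by simp only [Matrix.mul_assoc]
  _ = 0 := by rw [hM, Matrix.mul_zero, Matrix.zero_mul]

private lemma myPosSemidefSum {r ι : Type} [Fintype r] [Fintype ι] (f : ι → Matrix r r ℂ)
    (hf : ∀ x, (f x).PosSemidef) : (∑ x, f x).PosSemidef := by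
  classical
  refine Finset.sum_induction f _ (fun a b ha hb => ha.add hb) Matrix.PosSemidef.zero
    (fun x _ => hf x)

private lemma myInnerDot {r : ℕ} (x y : EuclideanSpace ℂ (Fin r)) :
    ⟪x, y⟫_ℂ = star (fun a => x a) ⬝ᵥ (fun a => y a) := by
  simp [PiLp.inner_apply, RCLike.inner_apply, dotProduct, mul_comm]

private lemma mySumDot {r ι : Type} [Fintype r] [Fintype ι] (f : ι → Matrix r r ℂ) (w : r → ℂ) :
    star w ⬝ᵥ ((∑ x, f x) *ᵥ w) = ∑ x, star w ⬝ᵥ (f x *ᵥ w) := by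
  have h1 : (∑ x, f x) *ᵥ w = ∑ x, (f x *ᵥ w) := by
    funext a
    simp only [Matrix.mulVec, dotProduct, Matrix.sum_apply, Finset.sum_mul, Finset.sum_apply]
    rw [Finset.sum_comm]
  rw [h1]
  simp only [dotProduct, Finset.sum_apply, Finset.mul_sum]
  rw [Finset.sum_comm]


private lemma myCompress {α β : Type} [Fintype α] [Fintype β] {r : ℕ}
    (X : Matrix α β ℝ)
    (C : α → Matrix (Fin r) (Fin r) ℂ) (D : β → Matrix (Fin r) (Fin r) ℂ)
    (hC : ∀ i, (C i).PosSemidef) (hD : ∀ j, (D j).PosSemidef)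
    (htr : ∀ i j, (X i j : ℂ) = (C i * D j).trace)
    (S : Submodule ℂ (EuclideanSpace ℂ (Fin r)))
    (hmem : ∀ i (v : Fin r → ℂ), WithLp.toLp 2 (C i *ᵥ v) ∈ S) :
    HasPsdFac X (Module.finrank ℂ S) := by
  classical
  set s := Module.finrank ℂ S with hs
  let b : OrthonormalBasis (Fin s) ℂ S := stdOrthonormalBasis ℂ S
  set U : Matrix (Fin r) (Fin s) ℂ := Matrix.of (fun a k => ((b k : EuclideanSpace ℂ (Fin r)) a)) with hU
  have hproj : ∀ v : EuclideanSpace ℂ (Fin r), v ∈ S → (U * Uᴴ) *ᵥ (fun a => v a) = fun a => v a := by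
    intro v hv
    have hco : ∑ k, (b.repr ⟨v, hv⟩ k) • ((b k : EuclideanSpace ℂ (Fin r))) = v := by
      have h1 := congrArg (Subtype.val) (b.sum_repr ⟨v, hv⟩)
      simpa using h1
    have hva : ∀ a, v a = ∑ k, (b.repr ⟨v, hv⟩ k) * (b k : EuclideanSpace ℂ (Fin r)) a := by
      intro a
      conv_lhs => rw [← hco]
      rw [WithLp.ofLp_sum, Finset.sum_apply a Finset.univ _]
      rfl
    have hrk : ∀ k, b.repr ⟨v, hv⟩ k = ∑ a', (star (U a' k)) * v a' := by
      intro k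
      rw [b.repr_apply_apply, Submodule.coe_inner, myInnerDot]
      rfl
    funext a
    calc ((U * Uᴴ) *ᵥ (fun a => v a)) a
        = ∑ a', (∑ k, U a k * star (U a' k)) * v a' := by
          simp [Matrix.mulVec, dotProduct, Matrix.mul_apply, Matrix.conjTranspose_apply]
      _ = ∑ k, (∑ a', star (U a' k) * v a') * U a k := by
          simp only [Finset.sum_mul]
          rw [Finset.sum_comm]
          exact Finset.sum_congr rfl fun k _ => Finset.sum_congr rfl fun a' _ => by ring
      _ = ∑ k, b.repr ⟨v, hv⟩ k * U a k := by
          exact Finset.sum_congr rfl fun k _ => by rw [hrk k]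
      _ = v a := (hva a).symm
  have hQC : ∀ i, (U * Uᴴ) * C i = C i := by
    intro i
    ext a j
    have h1 : (U * Uᴴ) *ᵥ (fun a => (C i *ᵥ Pi.single j 1) a) = fun a => (C i *ᵥ Pi.single j 1) a :=
      hproj (WithLp.toLp 2 (C i *ᵥ Pi.single j 1)) (hmem i _)
    calc ((U * Uᴴ) * C i) a j = ((U * Uᴴ) *ᵥ (fun bb => C i bb j)) a := by
          simp [Matrix.mul_apply, Matrix.mulVec, dotProduct]
      _ = ((U * Uᴴ) *ᵥ (fun a => (C i *ᵥ Pi.single j 1) a)) a := by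
          congr 1
          funext bb
          simp [Matrix.mulVec_single]
      _ = (C i *ᵥ Pi.single j 1) a := by rw [h1]
      _ = C i a j := by simp [Matrix.mulVec_single]
  have hCQ : ∀ i, C i * (U * Uᴴ) = C i := by
    intro i
    have h2 : ((U * Uᴴ) * C i)ᴴ = (C i)ᴴ := congrArg _ (hQC i)
    rw [conjTranspose_mul, (hC i).1.eq, conjTranspose_mul, conjTranspose_conjTranspose] at h2
    exact h2
  refine ⟨fun i => Uᴴ * C i * U, fun j => Uᴴ * D j * U,
    fun i => (hC i).conjTranspose_mul_mul_same U, fun j => (hD j).conjTranspose_mul_mul_same U,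
    fun i j => ?_⟩
  have etr : ((Uᴴ * C i * U) * (Uᴴ * D j * U)).trace = (C i * D j).trace := by
    have e1 : (Uᴴ * C i * U) * (Uᴴ * D j * U) = Uᴴ * ((C i * (U * Uᴴ)) * (D j * U)) := by
      simp only [Matrix.mul_assoc]
    rw [e1, hCQ i, trace_mul_comm]
    have e2 : C i * (D j * U) * Uᴴ = (C i * D j) * (U * Uᴴ) := by simp only [Matrix.mul_assoc]
    rw [e2, trace_mul_comm, ← Matrix.mul_assoc, hQC i]
  rw [htr i j, etr]

private lemma myExistsFac {α β : Type} [Fintype α] [Fintype β] (P : Matrix α β ℝ)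
    (h : ∀ i j, 0 ≤ P i j) : HasPsdFac P (Fintype.card α) := by
  classical
  let e := Fintype.equivFin α
  refine ⟨fun i => Matrix.diagonal (fun k => if k = e i then 1 else 0),
    fun j => Matrix.diagonal (fun k => ((P (e.symm k) j : ℝ) : ℂ)), ?_, ?_, ?_⟩
  · intro i
    rw [Matrix.posSemidef_diagonal_iff]
    intro k
    split
    · exact zero_le_one
    · exact le_rfl
  · intro j
    rw [Matrix.posSemidef_diagonal_iff]
    intro k
    exact Complex.zero_le_real.mpr (h _ _)
  · intro i j
    rw [Matrix.diagonal_mul_diagonal, Matrix.trace_diagonal]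
    simp only [ite_mul, one_mul, zero_mul]
    rw [Finset.sum_ite_eq' Finset.univ (e i)]
    simp

private lemma myTransposeFac {α β : Type} [Fintype α] [Fintype β] {P : Matrix α β ℝ} {r : ℕ}
    (h : HasPsdFac P r) : HasPsdFac Pᵀ r := by
  obtain ⟨C, D, hC, hD, htr⟩ := h
  exact ⟨D, C, hD, hC, fun j i => by rw [Matrix.transpose_apply, htr i j, trace_mul_comm]⟩

theorem stmt14 {n m : ℕ} (hm : 1 ≤ m)
    (P : Matrix (Fin n × Fin n) (Fin n × Fin n) ℝ) (hPnn : ∀ x y, 0 ≤ P x y)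
    (hPrank : prank P ≤ 2 * m)
    (hdiagzero : ∀ i x y, P (i, x) (i, y) = 0)
    (A B : Set (Fin n))
    (hA : A = {i | ∃ j, m <
      prank (Matrix.of fun x y => P (i, x) (j, y) : Matrix (Fin n) (Fin n) ℝ)})
    (hB : B = {j | ∃ i, m <
      prank (Matrix.of fun x y => P (i, x) (j, y) : Matrix (Fin n) (Fin n) ℝ)}) :
    A ∩ B = ∅ := by
  classical
  subst hA hB
  rw [Set.eq_empty_iff_forall_notMem]
  rintro i ⟨⟨j, hj⟩, ⟨i', hi'⟩⟩
  have hfac : HasPsdFac P (prank P) :=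
    Nat.sInf_mem (⟨Fintype.card (Fin n × Fin n), myExistsFac P hPnn⟩ :
      Set.Nonempty {r | HasPsdFac P r})
  set r := prank P with hr
  obtain ⟨C, D, hCpsd, hDpsd, htr⟩ := hfac
  set G : Matrix (Fin r) (Fin r) ℂ := ∑ x, C (i, x) with hG
  set H : Matrix (Fin r) (Fin r) ℂ := ∑ y, D (i, y) with hH
  have hGpsd : G.PosSemidef := myPosSemidefSum _ (fun x => hCpsd (i, x))
  have hHpsd : H.PosSemidef := myPosSemidefSum _ (fun y => hDpsd (i, y))
  have htr0 : (G * H).trace = 0 := by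
    have hz : ∀ x y : Fin n, (C (i, x) * D (i, y)).trace = 0 := by
      intro x y
      rw [← htr (i, x) (i, y), hdiagzero]
      simp
    rw [hG, hH, Finset.sum_mul]
    rw [Matrix.trace_sum]
    refine Finset.sum_eq_zero fun x _ => ?_
    rw [Finset.mul_sum, Matrix.trace_sum]
    exact Finset.sum_eq_zero fun y _ => hz x y
  have hGH : G * H = 0 := myPsdMulZero hGpsd hHpsd htr0
  have hHG : H * G = 0 := by
    have h1 := congrArg Matrix.conjTranspose hGH
    rwa [Matrix.conjTranspose_mul, hGpsd.1.eq, hHpsd.1.eq, Matrix.conjTranspose_zero] at h1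
  -- kernels as submodules of Euclidean space
  set K : Submodule ℂ (EuclideanSpace ℂ (Fin r)) :=
    LinearMap.ker (Matrix.toEuclideanLin G) with hK
  set L : Submodule ℂ (EuclideanSpace ℂ (Fin r)) :=
    LinearMap.ker (Matrix.toEuclideanLin H) with hL
  have hKmem : ∀ v : EuclideanSpace ℂ (Fin r), v ∈ K ↔ G *ᵥ (fun a => v a) = 0 := by
    intro v; rw [hK, LinearMap.mem_ker, Matrix.toEuclideanLin_apply, WithLp.toLp_eq_zero]
  have hLmem : ∀ v : EuclideanSpace ℂ (Fin r), v ∈ L ↔ H *ᵥ (fun a => v a) = 0 := by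
    intro v; rw [hL, LinearMap.mem_ker, Matrix.toEuclideanLin_apply, WithLp.toLp_eq_zero]
  -- columns of the C-blocks lie in Kᗮ
  have hCw : ∀ (M : Matrix (Fin r) (Fin r) ℂ) (T : Matrix (Fin r) (Fin r) ℂ)
      (hM : M.PosSemidef) (hT : T.PosSemidef)
      (hle : ∀ w : Fin r → ℂ, star w ⬝ᵥ (M *ᵥ w) ≤ star w ⬝ᵥ (T *ᵥ w))
      (w : Fin r → ℂ), T *ᵥ w = 0 → M *ᵥ w = 0 := by
    intro M T hM hT hle w hw
    have h1 : star w ⬝ᵥ (M *ᵥ w) = 0 := by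
      have h2 := hle w
      rw [hw, dotProduct_zero] at h2
      exact le_antisymm h2 (hM.dotProduct_mulVec_nonneg w)
    exact (hM.dotProduct_mulVec_zero_iff w).mp h1
  have hCker : ∀ (x : Fin n) (w : Fin r → ℂ), G *ᵥ w = 0 → C (i, x) *ᵥ w = 0 := by
    intro x w hw
    refine hCw _ G (hCpsd (i, x)) hGpsd (fun w' => ?_) w hw
    rw [hG, mySumDot]
    have : star w' ⬝ᵥ C (i, x) *ᵥ w' = ∑ x', if x' = x then star w' ⬝ᵥ C (i, x') *ᵥ w' else 0 := by
      rw [Finset.sum_ite_eq' Finset.univ x]; simp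
    rw [this]
    refine Finset.sum_le_sum fun x' _ => ?_
    split
    · next hxe => rw [hxe]
    · exact (hCpsd (i, x')).dotProduct_mulVec_nonneg w'
  have hDker : ∀ (y : Fin n) (w : Fin r → ℂ), H *ᵥ w = 0 → D (i, y) *ᵥ w = 0 := by
    intro y w hw
    refine hCw _ H (hDpsd (i, y)) hHpsd (fun w' => ?_) w hw
    rw [hH, mySumDot]
    have : star w' ⬝ᵥ D (i, y) *ᵥ w' = ∑ y', if y' = y then star w' ⬝ᵥ D (i, y') *ᵥ w' else 0 := by
      rw [Finset.sum_ite_eq' Finset.univ y]; simp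
    rw [this]
    refine Finset.sum_le_sum fun y' _ => ?_
    split
    · next hye => rw [hye]
    · exact (hDpsd (i, y')).dotProduct_mulVec_nonneg w'
  -- membership of ranges in orthogonal complements
  have hOrthMem : ∀ (M : Matrix (Fin r) (Fin r) ℂ) (hM : M.IsHermitian)
      (W : Submodule ℂ (EuclideanSpace ℂ (Fin r)))
      (hker : ∀ w : EuclideanSpace ℂ (Fin r), w ∈ W → M *ᵥ (fun a => w a) = 0)
      (v : Fin r → ℂ), WithLp.toLp 2 (M *ᵥ v) ∈ Wᗮ := by
    intro M hM W hker v
    refine (Submodule.mem_orthogonal W _).mpr ?_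
    intro u hu
    have h0 : M *ᵥ (fun a => u a) = 0 := hker _ hu
    have h1 : star (fun a => u a) ᵥ* M = 0 := by
      have h2 := congrArg star h0
      rw [Matrix.star_mulVec, hM.eq, star_zero] at h2
      exact h2
    rw [myInnerDot]
    show star (fun a => u a) ⬝ᵥ (M *ᵥ v) = 0
    rw [Matrix.dotProduct_mulVec, h1, zero_dotProduct]
  have hCmem : ∀ (x : Fin n) (v : Fin r → ℂ), WithLp.toLp 2 (C (i, x) *ᵥ v) ∈ Kᗮ :=
    fun x v => hOrthMem _ (hCpsd (i, x)).1 K (fun w hw => hCker x (fun a => w a) ((hKmem w).mp hw)) v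
  have hDmem : ∀ (y : Fin n) (v : Fin r → ℂ), WithLp.toLp 2 (D (i, y) *ᵥ v) ∈ Lᗮ :=
    fun y v => hOrthMem _ (hDpsd (i, y)).1 L (fun w hw => hDker y (fun a => w a) ((hLmem w).mp hw)) v
  -- Lᗮ ≤ K
  have hTK : Lᗮ ≤ K := by
    intro u hu
    rw [hKmem]
    have hGuL : WithLp.toLp 2 (G *ᵥ fun a => u a) ∈ L := by
      rw [hLmem]
      show H *ᵥ (G *ᵥ fun a => u a) = 0
      rw [Matrix.mulVec_mulVec, hHG, Matrix.zero_mulVec]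
    have h1 := (Submodule.mem_orthogonal L u).mp hu _ hGuL
    rw [myInnerDot] at h1
    have h1' : star (G *ᵥ fun a => u a) ⬝ᵥ (fun a => u a) = 0 := h1
    have e : star (G *ᵥ fun a => u a) ⬝ᵥ (fun a => u a) =
        star (fun a => u a) ⬝ᵥ (G *ᵥ fun a => u a) := by
      rw [Matrix.star_mulVec, hGpsd.1.eq, ← Matrix.dotProduct_mulVec]
    have h2 : star (fun a => u a) ⬝ᵥ (G *ᵥ fun a => u a) = 0 := by rw [← e]; exact h1'
    exact (hGpsd.dotProduct_mulVec_zero_iff _).mp h2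
  -- dimension count
  have hdim : Module.finrank ℂ Kᗮ + Module.finrank ℂ Lᗮ ≤ r := by
    have h1 : Module.finrank ℂ Lᗮ ≤ Module.finrank ℂ K := Submodule.finrank_mono hTK
    have h2 := Submodule.finrank_add_finrank_orthogonal K
    rw [finrank_euclideanSpace_fin] at h2
    omega
  -- compress both blocks
  have hX : HasPsdFac (Matrix.of fun x y => P (i, x) (j, y) : Matrix (Fin n) (Fin n) ℝ)
      (Module.finrank ℂ Kᗮ) :=
    myCompress _ (fun x => C (i, x)) (fun y => D (j, y)) (fun x => hCpsd _) (fun y => hDpsd _)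
      (fun x y => htr (i, x) (j, y)) Kᗮ hCmem
  have hs : m < Module.finrank ℂ Kᗮ := lt_of_lt_of_le hj (Nat.sInf_le hX)
  have hY' : HasPsdFac (Matrix.of fun x y => P (i', x) (i, y) : Matrix (Fin n) (Fin n) ℝ)ᵀ
      (Module.finrank ℂ Lᗮ) :=
    myCompress _ (fun y => D (i, y)) (fun x => C (i', x)) (fun y => hDpsd _) (fun x => hCpsd _)
      (fun y x => by
        rw [Matrix.transpose_apply, Matrix.of_apply, htr (i', x) (i, y), trace_mul_comm])
      Lᗮ hDmem
  have hY : HasPsdFac (Matrix.of fun x y => P (i', x) (i, y) : Matrix (Fin n) (Fin n) ℝ)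
      (Module.finrank ℂ Lᗮ) := by
    have h1 := myTransposeFac hY'
    rwa [Matrix.transpose_transpose] at h1
  have ht : m < Module.finrank ℂ Lᗮ := lt_of_lt_of_le hi' (Nat.sInf_le hY)
  omega
end

section
/- Let n ≥ 64 and let Q ∈ ℝ_{≥0}^{n×n} be a nonnegative matrix with Q(i,i) = 0 for all i, Q(i,j) > 0 for all i ≠ j, and nonnegative rank rank₊(Q) ≥ 2√n − 2. Suppose Q⊗Q = Σ_{k=1}^{r} P_k with each P_k ∈ ℝ_{≥0}^{n²×n²} nonnegative of PSD-rank prank(P_k) ≤ 2, and suppose r < log₂ n. Then for every pair (i,j) with i ≠ j there exists k₀ ∈ [r] such that the (i,j)-th n×n block of P_{k₀} (the submatrix of P_{k₀} in the position of the block Q(i,j)·Q of Q⊗Q) has ordinary rank at least 3. -/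
open Matrix BigOperators Kronecker
open scoped ComplexOrder

/-- A nonnegative real matrix of ordinary rank at most 2 has a nonnegative
factorization with 2 terms. -/
lemma nn_fac_of_rank_le_two {n m : ℕ} (M : Matrix (Fin n) (Fin m) ℝ)
    (hnn : ∀ x y, 0 ≤ M x y) (hr : M.rank ≤ 2) :
    ∃ (a : Fin 2 → Fin n → ℝ) (b : Fin 2 → Fin m → ℝ),
      (∀ l x, 0 ≤ a l x) ∧ (∀ l y, 0 ≤ b l y) ∧
        ∀ x y, M x y = ∑ l, a l x * b l y := by
  classical
  set col : Fin m → (Fin n → ℝ) := fun j x => M x j with hcol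
  set s : Fin m → ℝ := fun j => ∑ x, M x j with hsdef
  have hs0 : ∀ j, 0 ≤ s j := fun j => Finset.sum_nonneg fun x _ => hnn x j
  have hzero : ∀ j, s j = 0 → ∀ x, M x j = 0 := by
    intro j hj x
    have := (Finset.sum_eq_zero_iff_of_nonneg (fun x _ => hnn x j)).mp hj
    exact this x (Finset.mem_univ x)
  set V := LinearMap.range M.mulVecLin with hV
  have hcolV : ∀ j, col j ∈ V := by
    intro j
    exact ⟨Pi.single j 1, by ext x; simp [Matrix.mulVecLin, Matrix.mulVec_single, col]⟩
  have hVrank : Module.finrank ℝ V ≤ 2 := hr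
  by_cases hall : ∀ j, s j = 0
  · refine ⟨0, 0, by simp, by simp, ?_⟩
    intro x y
    simp [hzero y (hall y) x]
  · push_neg at hall
    obtain ⟨j₀, hj₀⟩ := hall
    have hsj₀ : 0 < s j₀ := lt_of_le_of_ne (hs0 j₀) (Ne.symm hj₀)
    set v₀ : Fin n → ℝ := (s j₀)⁻¹ • col j₀ with hv₀
    have hnormsum : ∀ j, s j ≠ 0 → ∑ x, ((s j)⁻¹ • col j) x = 1 := by
      intro j hj
      simp only [Pi.smul_apply, smul_eq_mul, ← Finset.mul_sum]
      rw [show ∑ x, col j x = s j from rfl, inv_mul_cancel₀ hj]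
    by_cases hone : ∀ j, s j ≠ 0 → (s j)⁻¹ • col j = v₀
    · -- rank one case
      refine ⟨![v₀, 0], ![s, 0], ?_, ?_, ?_⟩
      · intro l x
        fin_cases l
        · exact mul_nonneg (inv_nonneg.mpr (hs0 j₀)) (hnn x j₀)
        · simp
      · intro l y
        fin_cases l
        · exact hs0 y
        · simp
      · intro x y
        have hcase : M x y = s y * v₀ x := by
          by_cases hy : s y = 0
          · simp [hzero y hy x, hy]
          · have h2 := congrFun (hone y hy) x
            simp only [Pi.smul_apply, smul_eq_mul] at h2
            have hcy : col y x = M x y := rfl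
            rw [hcy] at h2
            rw [← h2]
            field_simp
        simp [Fin.sum_univ_two, hcase]
        ring
    · push_neg at hone
      obtain ⟨j₁, hj₁, hne01⟩ := hone
      have hsj₁ : 0 < s j₁ := lt_of_le_of_ne (hs0 j₁) (Ne.symm hj₁)
      set v₁ : Fin n → ℝ := (s j₁)⁻¹ • col j₁ with hv₁
      have hσ0 : ∑ x, v₀ x = 1 := hnormsum j₀ hj₀
      have hσ1 : ∑ x, v₁ x = 1 := hnormsum j₁ hj₁
      have hneq : v₀ ≠ v₁ := fun h => hne01 h.symm
      -- linear independence of v₀, v₁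
      have hindep : LinearIndependent ℝ ![v₀, v₁] := by
        rw [LinearIndependent.pair_iff]
        intro a b hab
        have hsum : a + b = 0 := by
          have h2 := congrArg (fun w : Fin n → ℝ => ∑ x, w x) hab
          simp only [Pi.add_apply, Pi.smul_apply, smul_eq_mul, Pi.zero_apply,
            Finset.sum_add_distrib, ← Finset.mul_sum, hσ0, hσ1,
            Finset.sum_const_zero] at h2
          linarith
        have ha : a = 0 := by
          by_contra ha
          apply hneq; ext x
          have h2 := congrFun hab x
          simp only [Pi.add_apply, Pi.smul_apply, smul_eq_mul, Pi.zero_apply] at h2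
          have h3 : a * (v₀ x - v₁ x) = 0 := by
            have hb : b = -a := by linarith
            rw [hb] at h2; ring_nf; ring_nf at h2; linarith
          rcases mul_eq_zero.mp h3 with h | h
          · exact absurd h ha
          · linarith
        exact ⟨ha, by linarith⟩
      set W : Submodule ℝ (Fin n → ℝ) := Submodule.span ℝ {v₀, v₁} with hW
      have hWV : W ≤ V := by
        rw [hW, Submodule.span_le]
        rintro w (rfl | rfl)
        · exact Submodule.smul_mem V _ (hcolV j₀)
        · exact Submodule.smul_mem V _ (hcolV j₁)
      have hWrank : Module.finrank ℝ W = 2 := by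
        have := finrank_span_eq_card hindep
        rw [show Set.range ![v₀, v₁] = {v₀, v₁} by
          ext w; simp [Fin.exists_fin_two]; tauto] at this
        rw [hW, this]
        simp
      have hWeq : W = V :=
        Submodule.eq_of_le_of_finrank_le hWV (by rw [hWrank]; exact hVrank)
      -- every normalized column is an affine combination of v₀ and v₁
      have hrep : ∀ j, ∃ c : ℝ, s j ≠ 0 →
          (s j)⁻¹ • col j = (1 - c) • v₀ + c • v₁ := by
        intro j
        by_cases hj : s j = 0
        · exact ⟨0, fun h => absurd hj h⟩
        · have hmem : (s j)⁻¹ • col j ∈ W := by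
            rw [hWeq]; exact Submodule.smul_mem V _ (hcolV j)
          obtain ⟨a, b, hab⟩ := Submodule.mem_span_pair.mp hmem
          refine ⟨b, fun _ => ?_⟩
          have hsum : a + b = 1 := by
            have hL : ∑ x, ((s j)⁻¹ • col j) x = 1 := hnormsum j hj
            have h2 := congrArg (fun w : Fin n → ℝ => ∑ x, w x) hab
            simp only [Pi.add_apply, Pi.smul_apply, smul_eq_mul,
              Finset.sum_add_distrib, ← Finset.mul_sum, hσ0, hσ1] at h2
            have hR : (s j)⁻¹ * ∑ i, col j i = 1 := by
              rw [show ∑ i, col j i = s j from rfl]; exact inv_mul_cancel₀ hj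
            rw [hR] at h2; linarith
          rw [← hab, show a = 1 - b by linarith]
      choose β hβ using hrep
      -- extremal columns
      set F : Finset (Fin m) := Finset.univ.filter (fun j => s j ≠ 0) with hF
      have hFne : F.Nonempty := ⟨j₀, by simp [hF, hj₀]⟩
      obtain ⟨jm, hjmF, hjmin⟩ := F.exists_min_image β hFne
      obtain ⟨jM, hjMF, hjmax⟩ := F.exists_max_image β hFne
      have hjmS : s jm ≠ 0 := by simpa [hF] using hjmF
      have hjMS : s jM ≠ 0 := by simpa [hF] using hjMF
      have hmemF : ∀ j, s j ≠ 0 → j ∈ F := fun j hj => by simp [hF, hj]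
      -- β j₀ ≠ β j₁
      have hβne : β j₀ ≠ β j₁ := by
        intro h
        apply hneq
        have h0 := hβ j₀ hj₀
        have h1 := hβ j₁ hj₁
        have e0 : v₀ = (1 - β j₀) • v₀ + β j₀ • v₁ := hv₀.trans h0
        have e1 : v₁ = (1 - β j₁) • v₀ + β j₁ • v₁ := hv₁.trans h1
        rw [h] at e0
        exact e0.trans e1.symm
      set δ : ℝ := β jM - β jm with hδdef
      have hδ : 0 < δ := by
        rcases lt_or_ge (β jm) (β jM) with h | h
        · simpa [hδdef] using sub_pos.mpr h
        · exfalso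
          have h0m := hjmin j₀ (hmemF j₀ hj₀)
          have h0M := hjmax j₀ (hmemF j₀ hj₀)
          have h1m := hjmin j₁ (hmemF j₁ hj₁)
          have h1M := hjmax j₁ (hmemF j₁ hj₁)
          exact hβne (by linarith)
      set lam : Fin m → ℝ := fun j => if s j = 0 then 0 else (β jM - β j) / δ with hlam
      have hlam01 : ∀ j, 0 ≤ lam j ∧ lam j ≤ 1 := by
        intro j
        by_cases hj : s j = 0
        · simp [hlam, hj]
        · have hm := hjmin j (hmemF j hj)
          have hM := hjmax j (hmemF j hj)
          simp only [hlam, if_neg hj]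
          constructor
          · exact div_nonneg (by linarith) hδ.le
          · rw [div_le_one hδ]; simp [hδdef]; linarith
      set vm : Fin n → ℝ := (s jm)⁻¹ • col jm with hvm
      set vM : Fin n → ℝ := (s jM)⁻¹ • col jM with hvM
      have hsm : 0 < s jm := lt_of_le_of_ne (hs0 jm) (Ne.symm hjmS)
      have hsM : 0 < s jM := lt_of_le_of_ne (hs0 jM) (Ne.symm hjMS)
      refine ⟨![vm, vM], ![fun j => s j * lam j, fun j => s j * (1 - lam j)],
        ?_, ?_, ?_⟩
      · intro l x
        fin_cases l
        · exact mul_nonneg (inv_nonneg.mpr hsm.le) (hnn x jm)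
        · exact mul_nonneg (inv_nonneg.mpr hsM.le) (hnn x jM)
      · intro l y
        fin_cases l
        · exact mul_nonneg (hs0 y) (hlam01 y).1
        · exact mul_nonneg (hs0 y) (by linarith [(hlam01 y).2])
      · intro x y
        simp only [Fin.sum_univ_two, Matrix.cons_val_zero, Matrix.cons_val_one,
          Matrix.head_cons]
        by_cases hy : s y = 0
        · simp [hzero y hy x, hy]
        · -- pointwise identity
          have hxy : M x y = s y * ((1 - β y) * v₀ x + β y * v₁ x) := by
            have := congrFun (hβ y hy) x
            simp only [Pi.add_apply, Pi.smul_apply, smul_eq_mul] at this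
            have hsy : s y ≠ 0 := hy
            calc M x y = s y * ((s y)⁻¹ * M x y) := by field_simp
              _ = s y * ((1 - β y) * v₀ x + β y * v₁ x) := by
                  rw [show (s y)⁻¹ * M x y = ((s y)⁻¹ • col y) x from rfl,
                    hβ y hy]; simp
          have hvmx : vm x = (1 - β jm) * v₀ x + β jm * v₁ x := by
            have := congrFun (hβ jm hjmS) x
            simpa [hvm] using this
          have hvMx : vM x = (1 - β jM) * v₀ x + β jM * v₁ x := by
            have := congrFun (hβ jM hjMS) x
            simpa [hvM] using this
          have hlamy : lam y = (β jM - β y) / δ := by simp [hlam, hy]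
          rw [hxy, hvmx, hvMx, hlamy]
          have hδ' : δ ≠ 0 := hδ.ne'
          field_simp
          ring


lemma logb_le_sqrt_sub_one {n : ℕ} (hn : 64 ≤ n) :
    Real.logb 2 n ≤ Real.sqrt n - 1 := by
  have hn0 : (0 : ℝ) < n := by positivity
  set t := Real.sqrt n with ht
  have ht8 : (8 : ℝ) ≤ t := by
    rw [ht, show (8:ℝ) = Real.sqrt 64 by
      rw [show (64:ℝ) = 8^2 by norm_num, Real.sqrt_sq (by norm_num)]]
    exact Real.sqrt_le_sqrt (by exact_mod_cast hn)
  have hlogn : Real.log n = 2 * Real.log t := by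
    rw [ht, Real.log_sqrt (le_of_lt hn0)]; ring
  have hl2 : (0.6931471803 : ℝ) < Real.log 2 := Real.log_two_gt_d9
  have hls : Real.log t ≤ t / 8 - 1 + 3 * Real.log 2 := by
    have h1 : Real.log (t / 8) ≤ t / 8 - 1 :=
      Real.log_le_sub_one_of_pos (by linarith)
    have h2 : Real.log t = Real.log (t / 8) + Real.log 8 := by
      rw [← Real.log_mul (by positivity) (by norm_num)]
      norm_num
    have h3 : Real.log 8 = 3 * Real.log 2 := by
      rw [show (8:ℝ) = 2 ^ 3 by norm_num, Real.log_pow]; push_cast; ring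
    rw [h2, h3]; linarith
  rw [Real.logb, hlogn, div_le_iff₀ (by linarith)]
  nlinarith [hl2, ht8, hls]

theorem stmt15 {n : ℕ} (hn : 64 ≤ n)
    (Q : Matrix (Fin n) (Fin n) ℝ)
    (hdiag : ∀ i, Q i i = 0) (hoff : ∀ i j, i ≠ j → 0 < Q i j)
    (hnnr : 2 * Real.sqrt n - 2 ≤ (nnRank Q : ℝ))
    (r : ℕ) (P : Fin r → Matrix (Fin n × Fin n) (Fin n × Fin n) ℝ)
    (hPnn : ∀ k x y, 0 ≤ P k x y) (hPrank : ∀ k, prank (P k) ≤ 2)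
    (hsum : Q ⊗ₖ Q = ∑ k, P k)
    (hr : (r : ℝ) < Real.logb 2 n) :
    ∀ i j : Fin n, i ≠ j → ∃ k₀ : Fin r,
      3 ≤ (Matrix.of fun x y => P k₀ (i, x) (j, y) : Matrix (Fin n) (Fin n) ℝ).rank := by
  intro i j hij
  by_contra hcon
  push_neg at hcon
  have hblk : ∀ k, (Matrix.of fun x y => P k (i, x) (j, y) :
      Matrix (Fin n) (Fin n) ℝ).rank ≤ 2 :=
    fun k => Nat.lt_succ_iff.mp (hcon k)
  have hfac := fun k => nn_fac_of_rank_le_two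
    (Matrix.of fun x y => P k (i, x) (j, y))
    (fun x y => hPnn k (i, x) (j, y)) (hblk k)
  choose a b ha hb hab using hfac
  set c := Q i j with hcdef
  have hc : 0 < c := hoff i j hij
  have hsum' : ∀ x y, c * Q x y = ∑ k, P k (i, x) (j, y) := by
    intro x y
    have h2 := congrFun (congrFun hsum (i, x)) (j, y)
    simpa [Matrix.kroneckerMap_apply, Matrix.sum_apply] using h2
  have hQ : ∀ x y, Q x y =
      ∑ p : Fin r × Fin 2, (c⁻¹ * a p.1 p.2 x) * b p.1 p.2 y := by
    intro x y
    rw [Fintype.sum_prod_type]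
    have h1 : ∑ k, ∑ l, a k l x * b k l y = c * Q x y := by
      rw [hsum' x y]
      refine Finset.sum_congr rfl fun k _ => ?_
      rw [← hab k x y]
      simp
    have h2 : ∑ k, ∑ l : Fin 2, (c⁻¹ * a k l x) * b k l y
        = c⁻¹ * ∑ k, ∑ l, a k l x * b k l y := by
      rw [Finset.mul_sum]
      refine Finset.sum_congr rfl fun k _ => ?_
      rw [Finset.mul_sum]
      refine Finset.sum_congr rfl fun l _ => by ring
    rw [h2, h1, ← mul_assoc, inv_mul_cancel₀ hc.ne', one_mul]
  set e := (finProdFinEquiv : Fin r × Fin 2 ≃ Fin (r * 2)) with he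
  have hle : nnRank Q ≤ r * 2 := by
    apply Nat.sInf_le
    refine ⟨fun l x => c⁻¹ * a (e.symm l).1 (e.symm l).2 x,
      fun l y => b (e.symm l).1 (e.symm l).2 y, ?_, ?_, ?_⟩
    · intro l x
      exact mul_nonneg (inv_nonneg.mpr hc.le) (ha _ _ x)
    · intro l y
      exact hb _ _ y
    · intro x y
      rw [hQ x y]
      exact (Equiv.sum_comp e.symm
        (fun p : Fin r × Fin 2 => (c⁻¹ * a p.1 p.2 x) * b p.1 p.2 y)).symm
  have hlogb : Real.logb 2 n ≤ Real.sqrt n - 1 := logb_le_sqrt_sub_one hn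
  have hcast : (nnRank Q : ℝ) ≤ (r : ℝ) * 2 := by exact_mod_cast Nat.cast_le.mpr hle
  push_cast at hcast
  linarith
end
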